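/- arXiv:1204.2900 — 3 statements merged into one kernel-verified Lean document; each statement's English description precedes it below -/
import Mathlib

section
/- Let C be a completely regular code in H(m,q) with distance partition {C, C_1, …, C_ρ}. Then C_ρ is completely regular with distance partition {C_ρ, C_{ρ−1}, …, C_1, C}; Aut(C) = Aut(C_ρ); and C is X-completely transitive if and only if C_ρ is X-completely transitive. -/
open Equiv Pointwise

section HammingDefs

variable {I : Type*} [Fintype I] [DecidableEq I] {q : ℕ}

/-- The permutation of the vertex set of the Hamming graph `H(I,q)` induced by the
letter permutations `g i` (acting coordinatewise) followed by the coordinate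
permutation `σ`:  `(α^x)_i = g_{σ⁻¹ i} (α_{σ⁻¹ i})`. -/
def tvp (g : I → Equiv.Perm (Fin q)) (σ : Equiv.Perm I) : Equiv.Perm (I → Fin q) where
  toFun α i := g (σ⁻¹ i) (α (σ⁻¹ i))
  invFun β i := (g i)⁻¹ (β (σ i))
  left_inv α := by funext i; simp
  right_inv β := by funext i; simp

/-- The automorphism group of the Hamming graph `H(I,q)`: all permutations of the
vertex set preserving adjacency (Hamming distance 1). -/
def autH (I : Type*) [Fintype I] [DecidableEq I] (q : ℕ) :
    Subgroup (Equiv.Perm (I → Fin q)) where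
  carrier := {y | ∀ α β : I → Fin q, hammingDist (y α) (y β) = 1 ↔ hammingDist α β = 1}
  one_mem' := by intro α β; simp
  mul_mem' := by
    intro a b ha hb α β
    rw [Equiv.Perm.mul_apply, Equiv.Perm.mul_apply, ha, hb]
  inv_mem' := by
    intro a ha α β
    simpa using (ha (a⁻¹ α) (a⁻¹ β)).symm

/-- The homomorphism `S_q × S_I → Sym(V(H(I,q)))` whose image is `Diag(S_q) ⋊ L`. -/
def diagLHom (I : Type*) [Fintype I] [DecidableEq I] (q : ℕ) :
    Equiv.Perm (Fin q) × Equiv.Perm I →* Equiv.Perm (I → Fin q) where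
  toFun x := tvp (fun _ => x.1) x.2
  map_one' := by
    ext α i
    simp [tvp]
  map_mul' x y := by
    ext α i
    simp [tvp, mul_inv_rev]

/-- The subgroup `Diag_I(S_q) ⋊ L` of the automorphism group of `H(I,q)`. -/
def diagL (I : Type*) [Fintype I] [DecidableEq I] (q : ℕ) :
    Subgroup (Equiv.Perm (I → Fin q)) :=
  (diagLHom I q).range

/-- The subgroup `L` of pure coordinate permutations of `H(I,q)`. -/
def permL (I : Type*) [Fintype I] [DecidableEq I] (q : ℕ) :
    Subgroup (Equiv.Perm (I → Fin q)) :=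
  ((diagLHom I q).comp (MonoidHom.inr (Equiv.Perm (Fin q)) (Equiv.Perm I))).range

/-- Distance from a vertex to a code. -/
noncomputable def distC (γ : I → Fin q) (C : Set (I → Fin q)) : ℕ :=
  sInf {d | ∃ β ∈ C, hammingDist γ β = d}

/-- The cell `C_i` of the distance partition of the code `C`. -/
def cell (C : Set (I → Fin q)) (i : ℕ) : Set (I → Fin q) :=
  {γ | distC γ C = i}

/-- The covering radius of the code `C`. -/
noncomputable def covRad (C : Set (I → Fin q)) : ℕ :=
  sSup {d | ∃ γ : I → Fin q, distC γ C = d}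

/-- The minimum distance of the code `C`. -/
noncomputable def minDist (C : Set (I → Fin q)) : ℕ :=
  sInf {d | ∃ β ∈ C, ∃ γ ∈ C, β ≠ γ ∧ hammingDist β γ = d}

/-- `S` is an orbit of the subgroup `X` of permutations of the vertex set. -/
def IsOrbitOf (X : Subgroup (Equiv.Perm (I → Fin q))) (S : Set (I → Fin q)) : Prop :=
  ∃ v, S = {w | ∃ x ∈ X, x v = w}

/-- `C` is `X`-neighbour transitive: `X` is a group of automorphisms of the Hamming
graph, and both `C` and its set of neighbours `C_1` are `X`-orbits. -/
def NbrTransitive (X : Subgroup (Equiv.Perm (I → Fin q))) (C : Set (I → Fin q)) : Prop :=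
  X ≤ autH I q ∧ IsOrbitOf X C ∧ IsOrbitOf X (cell C 1)

/-- `C` is `X`-completely transitive: every cell of the distance partition is an `X`-orbit. -/
def ComplTransitive (X : Subgroup (Equiv.Perm (I → Fin q))) (C : Set (I → Fin q)) : Prop :=
  X ≤ autH I q ∧ ∀ i ≤ covRad C, IsOrbitOf X (cell C i)

/-- `C` is diagonally `X`-neighbour transitive. -/
def DiagNbrTransitive (X : Subgroup (Equiv.Perm (I → Fin q))) (C : Set (I → Fin q)) : Prop :=
  NbrTransitive X C ∧ X ≤ diagL I q

/-- The automorphism group of the code `C`: the setwise stabiliser of `C` in the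
automorphism group of the Hamming graph. -/
def autCode (C : Set (I → Fin q)) : Subgroup (Equiv.Perm (I → Fin q)) :=
  autH I q ⊓ MulAction.stabilizer (Equiv.Perm (I → Fin q)) C

/-- Number of occurrences of the letter `a` in the vertex `α`. -/
def cnt (α : I → Fin q) (a : Fin q) : ℕ :=
  (Finset.univ.filter fun i => α i = a).card

/-- The composition `Q(α)` of a vertex: the set of pairs `(a, p)` such that the letter `a`
occurs exactly `p > 0` times in `α`. -/
def compOf (α : I → Fin q) : Set (Fin q × ℕ) :=
  {x | 0 < x.2 ∧ cnt α x.1 = x.2}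

/-- `Num(α)`: the set of pairs `(p, s)` such that exactly `s > 0` distinct letters occur
exactly `p > 0` times in `α`. -/
def numOf (α : I → Fin q) : Set (ℕ × ℕ) :=
  {x | 0 < x.1 ∧ 0 < x.2 ∧ (Finset.univ.filter fun a => cnt α a = x.1).card = x.2}

/-- The repetition code `Rep(I,q)`. -/
def repCode (I : Type*) [Fintype I] [DecidableEq I] (q : ℕ) : Set (I → Fin q) :=
  {α | ∃ a, α = fun _ => a}

/-- The injection code `Inj(I,q)`: all tuples with pairwise distinct entries. -/
def injCode (I : Type*) [Fintype I] [DecidableEq I] (q : ℕ) : Set (I → Fin q) :=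
  {α | Function.Injective α}

/-- The code `All(pq,q)`: all vertices in which every letter occurs exactly `p` times. -/
def allCode (I : Type*) [Fintype I] [DecidableEq I] (q p : ℕ) : Set (I → Fin q) :=
  {α | ∀ a, cnt α a = p}

/-- `C` is `s`-regular. -/
def RegularUpTo (C : Set (I → Fin q)) (s : ℕ) : Prop :=
  ∀ i ≤ s, ∀ γ ∈ cell C i, ∀ γ' ∈ cell C i, ∀ k : ℕ,
    {β ∈ C | hammingDist γ β = k}.ncard = {β ∈ C | hammingDist γ' β = k}.ncard

/-- `C` is completely regular. -/
def ComplRegular (C : Set (I → Fin q)) : Prop :=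
  RegularUpTo C (covRad C)

/-- `C` is a constant composition code: every letter occurs the same positive number of
times in every codeword. -/
def IsCCC (C : Set (I → Fin q)) : Prop :=
  C.Nonempty ∧ ∃ f : Fin q → ℕ, (∀ a, 0 < f a) ∧ ∀ β ∈ C, ∀ a, cnt β a = f a

end HammingDefs

section Weight

/-- The weight of a binary vertex: number of nonzero entries. -/
def wt {m : ℕ} (α : Fin m → Fin 2) : ℕ :=
  (Finset.univ.filter fun i => α i ≠ 0).card

/-- The code `W([m/2],2)`: binary `m`-tuples of weight `(m+1)/2` or `(m-1)/2`. -/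
def wCode (m : ℕ) : Set (Fin m → Fin 2) :=
  {α | wt α = (m+1)/2 ∨ wt α = (m-1)/2}

/-- The code `W([m/2],2)` over a general alphabet (used when `q = 2`): vertices in which
one letter occurs `(m+1)/2` times and another `(m-1)/2` times. -/
def wCodeGen (m q : ℕ) : Set (Fin m → Fin q) :=
  {α | ∃ a b : Fin q, a ≠ b ∧ cnt α a = (m+1)/2 ∧ cnt α b = (m-1)/2}

end Weight

section PermCodes

/-- The vertex `α(g) = (1^g, …, q^g)` of `H(q,q)` associated with a permutation `g`. -/
def alphaVtx {q : ℕ} (g : Equiv.Perm (Fin q)) : Fin q → Fin q := fun i => g i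

/-- The permutation code generated by a set `T` of permutations. -/
def permCode {q : ℕ} (T : Set (Equiv.Perm (Fin q))) : Set (Fin q → Fin q) :=
  alphaVtx '' T

end PermCodes

section Repetition

variable {I : Type*} [Fintype I] [DecidableEq I] {q : ℕ}

/-- The `p`-fold repetition `rep_p(α) = (α,…,α)`, a vertex of `H(p·|I|, q)`. -/
def repv (p : ℕ) (α : I → Fin q) : Fin p × I → Fin q := fun ji => α ji.2

/-- The `p`-fold repetition code `Rep_p(C)`. -/
def repCodeP (p : ℕ) (C : Set (I → Fin q)) : Set (Fin p × I → Fin q) :=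
  repv p '' C

/-- The homomorphism `Sym(V(H(I,q))) × S_p → Sym(V(H(p·|I|,q)))`: the pair `(x,σ)` acts on
`p`-tuples of vertices by `(α_1,…,α_p) ↦ (α_{σ⁻¹(1)}^x, …, α_{σ⁻¹(p)}^x)`. -/
def repHom (p : ℕ) (I : Type*) [Fintype I] [DecidableEq I] (q : ℕ) :
    Equiv.Perm (I → Fin q) × Equiv.Perm (Fin p) →* Equiv.Perm (Fin p × I → Fin q) where
  toFun x :=
    { toFun := fun β ji => x.1 (fun i => β (x.2⁻¹ ji.1, i)) ji.2
      invFun := fun β ji => x.1⁻¹ (fun i => β (x.2 ji.1, i)) ji.2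
      left_inv := by intro β; funext ji; simp
      right_inv := by intro β; funext ji; simp }
  map_one' := by ext β ji; simp
  map_mul' x y := by ext β ji; simp [mul_inv_rev]

end Repetition
section CRAux

set_option linter.unusedSectionVars false
set_option linter.unusedVariables false

open Finset Function

variable {I : Type*} [Fintype I] [DecidableEq I] {q : ℕ}

lemma hammingDist_def (x y : I → Fin q) :
    hammingDist x y = (Finset.univ.filter fun i => x i ≠ y i).card := rfl

lemma distC_le {C : Set (I → Fin q)} {γ β : I → Fin q} (hβ : β ∈ C) :
    distC γ C ≤ hammingDist γ β :=
  Nat.sInf_le ⟨β, hβ, rfl⟩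

lemma exists_nearest {C : Set (I → Fin q)} (hC : C.Nonempty) (γ : I → Fin q) :
    ∃ β ∈ C, hammingDist γ β = distC γ C := by
  obtain ⟨β0, hβ0⟩ := hC
  exact Nat.sInf_mem (⟨hammingDist γ β0, β0, hβ0, rfl⟩ :
    {d | ∃ β ∈ C, hammingDist γ β = d}.Nonempty)

lemma distC_le_card {C : Set (I → Fin q)} (hC : C.Nonempty) (γ : I → Fin q) :
    distC γ C ≤ Fintype.card I := by
  obtain ⟨β0, hβ0⟩ := hC
  exact le_trans (distC_le hβ0) hammingDist_le_card_fintype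

lemma distC_eq_zero_iff {C : Set (I → Fin q)} (hC : C.Nonempty) {γ : I → Fin q} :
    distC γ C = 0 ↔ γ ∈ C := by
  constructor
  · intro h
    obtain ⟨β, hβ, hd⟩ := exists_nearest hC γ
    rw [h, hammingDist_eq_zero] at hd
    rwa [hd]
  · intro h
    exact Nat.le_zero.mp (le_trans (distC_le h) (by simp))

lemma cell_zero {C : Set (I → Fin q)} (hC : C.Nonempty) : cell C 0 = C := by
  ext γ; exact distC_eq_zero_iff hC

lemma distC_triangle {C : Set (I → Fin q)} (hC : C.Nonempty) (γ γ' : I → Fin q) :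
    distC γ C ≤ hammingDist γ γ' + distC γ' C := by
  obtain ⟨β, hβ, hd⟩ := exists_nearest hC γ'
  exact le_trans (distC_le hβ) (by rw [← hd]; exact hammingDist_triangle _ _ _)

lemma distC_le_covRad {C : Set (I → Fin q)} (hC : C.Nonempty) (γ : I → Fin q) :
    distC γ C ≤ covRad C :=
  le_csSup ⟨Fintype.card I, fun d ⟨γ', hγ'⟩ => hγ' ▸ distC_le_card hC γ'⟩ ⟨γ, rfl⟩

lemma exists_covRad {C : Set (I → Fin q)} (hC : C.Nonempty) (hq : 0 < q) :
    ∃ γ : I → Fin q, distC γ C = covRad C := by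
  have : Nonempty (Fin q) := ⟨⟨0, hq⟩⟩
  obtain ⟨γ0⟩ : Nonempty (I → Fin q) := inferInstance
  have hne : {d | ∃ γ : I → Fin q, distC γ C = d}.Nonempty := ⟨distC γ0 C, γ0, rfl⟩
  have hbdd : BddAbove {d | ∃ γ : I → Fin q, distC γ C = d} :=
    ⟨Fintype.card I, fun d ⟨γ', hγ'⟩ => hγ' ▸ distC_le_card hC γ'⟩
  exact Nat.sSup_mem hne hbdd

lemma card_filter_split (P : I → Prop) [DecidablePred P] (i : I) :
    (Finset.univ.filter P).card
      = (Finset.univ.filter fun j => j ≠ i ∧ P j).card + if P i then 1 else 0 := by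
  classical
  have h : Finset.univ.filter P
      = (Finset.univ.filter fun j => j ≠ i ∧ P j) ∪ (Finset.univ.filter fun j => j = i ∧ P j) := by
    ext j; by_cases hj : j = i <;> simp [hj]
  have h2 : (Finset.univ.filter fun j => j = i ∧ P j) = if P i then {i} else ∅ := by
    split <;> (ext j; rename_i hP; constructor)
    · intro hj; simp at hj; simp [hj.1]
    · intro hj; simp at hj; simp [hj, hP]
    · intro hj; simp at hj; exact absurd (hj.1 ▸ hj.2) hP
    · intro hj; simp at hj
  rw [h, Finset.card_union_of_disjoint, h2]
  · split <;> simp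
  · rw [Finset.disjoint_filter]
    intro j _ hj hj2
    exact hj.1 hj2.1

lemma hammingDist_update (γ β : I → Fin q) (i : I) (a : Fin q) :
    hammingDist (Function.update γ i a) β + (if γ i ≠ β i then 1 else 0)
      = hammingDist γ β + (if a ≠ β i then 1 else 0) := by
  classical
  rw [hammingDist_def, hammingDist_def,
    card_filter_split (fun j => Function.update γ i a j ≠ β j) i,
    card_filter_split (fun j => γ j ≠ β j) i]
  simp only [Function.update_self]
  have : (Finset.univ.filter fun j => j ≠ i ∧ Function.update γ i a j ≠ β j)
      = Finset.univ.filter fun j => j ≠ i ∧ γ j ≠ β j := by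
    apply Finset.filter_congr
    intro j _
    constructor
    · rintro ⟨hj, h⟩; rw [Function.update_of_ne hj] at h; exact ⟨hj, h⟩
    · rintro ⟨hj, h⟩; rw [Function.update_of_ne hj]; exact ⟨hj, h⟩
  rw [this]; ring

/-- The set of neighbours of `γ` in the Hamming graph. -/
def nbr (γ : I → Fin q) : Finset (I → Fin q) :=
  Finset.univ.filter fun δ => hammingDist γ δ = 1

lemma mem_nbr {γ δ : I → Fin q} :
    δ ∈ nbr γ ↔ ∃ i a, a ≠ γ i ∧ δ = Function.update γ i a := by
  classical
  constructor
  · intro h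
    simp only [nbr, Finset.mem_filter, Finset.mem_univ, true_and] at h
    rw [hammingDist_def] at h
    obtain ⟨i, hi⟩ := Finset.card_eq_one.mp h
    have hiD : γ i ≠ δ i := by
      have : i ∈ Finset.univ.filter fun j => γ j ≠ δ j := hi ▸ Finset.mem_singleton_self i
      simpa using this
    refine ⟨i, δ i, Ne.symm hiD, ?_⟩
    funext j
    by_cases hj : j = i
    · subst hj; simp
    · rw [Function.update_of_ne hj]
      by_contra hne
      have hmem : j ∈ Finset.univ.filter fun j' => γ j' ≠ δ j' := by
        simp only [Finset.mem_filter, Finset.mem_univ, true_and]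
        exact fun h' => hne (h'.symm)
      rw [hi] at hmem
      exact hj (Finset.mem_singleton.mp hmem)
  · rintro ⟨i, a, ha, rfl⟩
    simp only [nbr, Finset.mem_filter, Finset.mem_univ, true_and]
    rw [hammingDist_def]
    have : (Finset.univ.filter fun j => γ j ≠ Function.update γ i a j) = {i} := by
      ext j
      by_cases hj : j = i
      · subst hj; simp [Ne.symm ha]
      · simp [hj, Function.update_of_ne hj]
    rw [this, Finset.card_singleton]

lemma nbr_card_filter (γ : I → Fin q) (P : (I → Fin q) → Prop) [DecidablePred P] :
    ((nbr γ).filter P).card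
      = ∑ i : I, (Finset.univ.filter fun a : Fin q =>
          a ≠ γ i ∧ P (Function.update γ i a)).card := by
  classical
  have hset : (nbr γ).filter P
      = Finset.univ.biUnion fun i : I =>
          (Finset.univ.filter fun a : Fin q => a ≠ γ i ∧ P (Function.update γ i a)).image
            fun a => Function.update γ i a := by
    ext δ
    simp only [Finset.mem_filter, Finset.mem_biUnion, Finset.mem_image, Finset.mem_univ, true_and]
    constructor
    · rintro ⟨hδ, hP⟩
      obtain ⟨i, a, ha, rfl⟩ := mem_nbr.mp hδ
      exact ⟨i, a, ⟨ha, hP⟩, rfl⟩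
    · rintro ⟨i, a, ⟨ha, hP⟩, rfl⟩
      exact ⟨mem_nbr.mpr ⟨i, a, ha, rfl⟩, hP⟩
  rw [hset, Finset.card_biUnion]
  · exact Finset.sum_congr rfl fun i _ =>
      Finset.card_image_of_injective _ (Function.update_injective γ i)
  · intro i _ i' _ hii'
    rw [Function.onFun, Finset.disjoint_left]
    rintro δ hδ hδ'
    simp only [Finset.mem_image, Finset.mem_filter, Finset.mem_univ, true_and] at hδ hδ'
    obtain ⟨a, ⟨ha, _⟩, rfl⟩ := hδ
    obtain ⟨a', ⟨ha', _⟩, heq⟩ := hδ'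
    apply ha
    have hia := congrFun heq i
    rw [Function.update_self, Function.update_of_ne hii'] at hia
    exact hia.symm

lemma card_fin_ne (b : Fin q) : (Finset.univ.filter fun a => a ≠ b).card = q - 1 := by
  rw [Finset.filter_ne', Finset.card_erase_of_mem (Finset.mem_univ b)]
  simp

lemma card_fin_ne_eq {b c : Fin q} (h : c ≠ b) :
    (Finset.univ.filter fun a => a ≠ b ∧ a = c).card = 1 := by
  have : (Finset.univ.filter fun a => a ≠ b ∧ a = c) = {c} := by
    ext a
    constructor
    · intro ha; simp at ha; simp [ha.2]
    · intro ha; simp at ha; simp [ha, h]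
  rw [this, Finset.card_singleton]

lemma card_fin_ne_ne {b c : Fin q} (h : b ≠ c) :
    (Finset.univ.filter fun a => a ≠ b ∧ a ≠ c).card = q - 2 := by
  have : (Finset.univ.filter fun a => a ≠ b ∧ a ≠ c) = Finset.univ \ {b, c} := by
    ext a; simp [not_or]
  rw [this, Finset.card_sdiff_of_subset (Finset.subset_univ _)]
  rw [Finset.card_insert_of_notMem (by simpa using h), Finset.card_singleton]
  simp

/-- The intersection numbers of the Hamming graph: `chi m q t s` is the number of
neighbours of `γ` at distance `t` from `β`, where `s = d(γ,β)`. -/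
def chi (m q t s : ℕ) : ℕ :=
  if s = t + 1 then t + 1
  else if s = t then t * (q - 2)
  else if t = s + 1 then (m - s) * (q - 1)
  else 0

lemma nbr_count (γ β : I → Fin q) (t : ℕ) :
    ((nbr γ).filter fun δ => hammingDist δ β = t).card
      = chi (Fintype.card I) q t (hammingDist γ β) := by
  classical
  rw [nbr_card_filter]
  unfold chi
  split_ifs with h1 h2 h3
  · -- s = t + 1 : count is t + 1
    have hval : ∀ i : I, (Finset.univ.filter fun a : Fin q =>
        a ≠ γ i ∧ hammingDist (Function.update γ i a) β = t).card
          = if γ i ≠ β i then 1 else 0 := by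
      intro i
      by_cases hi : γ i = β i
      · rw [if_neg (not_not_intro hi)]
        rw [Finset.card_eq_zero, Finset.filter_eq_empty_iff]
        intro a _
        rintro ⟨ha, hd⟩
        have hu := hammingDist_update γ β i a
        rw [hd, h1] at hu
        have hβ : a ≠ β i := hi ▸ ha
        simp [hi, hβ] at hu
        omega
      · rw [if_pos hi]
        have hfe : (Finset.univ.filter fun a : Fin q =>
            a ≠ γ i ∧ hammingDist (Function.update γ i a) β = t)
              = Finset.univ.filter fun a : Fin q => a ≠ γ i ∧ a = β i := by
          apply Finset.filter_congr
          intro a _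
          simp only [and_congr_right_iff]
          intro ha
          have hu := hammingDist_update γ β i a
          rw [h1, if_pos hi] at hu
          by_cases hb : a = β i
          · simp only [hb, ne_eq, not_true_eq_false, if_false] at hu
            simp only [hb, iff_true]
            omega
          · simp only [ne_eq, hb, not_false_eq_true, if_true] at hu
            simp only [hb, iff_false]
            omega
        rw [hfe, card_fin_ne_eq (Ne.symm hi)]
    rw [Finset.sum_congr rfl fun i _ => hval i, ← Finset.card_filter,
      show (Finset.univ.filter fun i => γ i ≠ β i).card = hammingDist γ β from rfl, h1]
  · -- s = t : count is t * (q - 2)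
    have hval : ∀ i : I, (Finset.univ.filter fun a : Fin q =>
        a ≠ γ i ∧ hammingDist (Function.update γ i a) β = t).card
          = if γ i ≠ β i then q - 2 else 0 := by
      intro i
      by_cases hi : γ i = β i
      · rw [if_neg (not_not_intro hi)]
        rw [Finset.card_eq_zero, Finset.filter_eq_empty_iff]
        intro a _
        rintro ⟨ha, hd⟩
        have hu := hammingDist_update γ β i a
        rw [hd, h2] at hu
        have hβ : a ≠ β i := hi ▸ ha
        simp [hi, hβ] at hu
      · rw [if_pos hi]
        have hfe : (Finset.univ.filter fun a : Fin q =>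
            a ≠ γ i ∧ hammingDist (Function.update γ i a) β = t)
              = Finset.univ.filter fun a : Fin q => a ≠ γ i ∧ a ≠ β i := by
          apply Finset.filter_congr
          intro a _
          simp only [and_congr_right_iff]
          intro ha
          have hu := hammingDist_update γ β i a
          rw [h2, if_pos hi] at hu
          by_cases hb : a = β i
          · simp only [hb, ne_eq, not_true_eq_false, if_false] at hu
            simp only [hb, ne_eq, not_true_eq_false, iff_false]
            omega
          · simp only [ne_eq, hb, not_false_eq_true, if_true] at hu
            simp only [ne_eq, hb, not_false_eq_true, iff_true]
            omega
        rw [hfe, card_fin_ne_ne hi]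
    rw [Finset.sum_congr rfl fun i _ => hval i, Finset.sum_ite, Finset.sum_const,
      Finset.sum_const]
    simp only [smul_eq_mul, mul_zero, add_zero]
    rw [show (Finset.univ.filter fun i => γ i ≠ β i).card = hammingDist γ β from rfl, h2,
      mul_comm]
  · -- t = s + 1 : count is (m - s) * (q - 1)
    have hval : ∀ i : I, (Finset.univ.filter fun a : Fin q =>
        a ≠ γ i ∧ hammingDist (Function.update γ i a) β = t).card
          = if γ i ≠ β i then 0 else q - 1 := by
      intro i
      by_cases hi : γ i = β i
      · rw [if_neg (not_not_intro hi)]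
        have hfe : (Finset.univ.filter fun a : Fin q =>
            a ≠ γ i ∧ hammingDist (Function.update γ i a) β = t)
              = Finset.univ.filter fun a : Fin q => a ≠ γ i := by
          apply Finset.filter_congr
          intro a _
          constructor
          · rintro ⟨ha, _⟩; exact ha
          · intro ha
            refine ⟨ha, ?_⟩
            have hu := hammingDist_update γ β i a
            have hβ : a ≠ β i := hi ▸ ha
            simp only [ne_eq, hi, not_true_eq_false, if_false, hβ, not_false_eq_true,
              if_true, add_zero] at hu
            omega
        rw [hfe, card_fin_ne]
      · rw [if_pos hi]
        rw [Finset.card_eq_zero, Finset.filter_eq_empty_iff]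
        intro a _
        rintro ⟨ha, hd⟩
        have hu := hammingDist_update γ β i a
        rw [hd, if_pos hi] at hu
        by_cases hb : a = β i
        · simp only [hb, ne_eq, not_true_eq_false, if_false, add_zero] at hu
          omega
        · simp only [ne_eq, hb, not_false_eq_true, if_true] at hu
          omega
    rw [Finset.sum_congr rfl fun i _ => hval i, Finset.sum_ite, Finset.sum_const,
      Finset.sum_const]
    simp only [smul_eq_mul, mul_zero, zero_add]
    have hcards := Finset.card_filter_add_card_filter_not
      (s := (Finset.univ : Finset I)) (p := fun i => γ i ≠ β i)
    have hD : (Finset.univ.filter fun i => γ i ≠ β i).card = hammingDist γ β := rfl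
    have huniv : (Finset.univ : Finset I).card = Fintype.card I := Finset.card_univ
    have hnot : (Finset.univ.filter fun i => ¬ γ i ≠ β i).card
        = Fintype.card I - hammingDist γ β := by omega
    rw [hnot]
  · -- far : count is 0
    have hz : ∀ i : I, (Finset.univ.filter fun a : Fin q =>
        a ≠ γ i ∧ hammingDist (Function.update γ i a) β = t).card = 0 := by
      intro i
      rw [Finset.card_eq_zero, Finset.filter_eq_empty_iff]
      intro a _
      rintro ⟨ha, hd⟩
      have hu := hammingDist_update γ β i a
      rw [hd] at hu
      split_ifs at hu <;> omega
    rw [Finset.sum_congr rfl fun i _ => hz i, Finset.sum_const, smul_eq_mul, mul_zero]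

lemma double_count {α : Type*} [DecidableEq α] (A B : Finset α) (P : α → α → Prop)
    [∀ a b, Decidable (P a b)] :
    ∑ a ∈ A, (B.filter fun b => P a b).card = ∑ b ∈ B, (A.filter fun a => P a b).card := by
  simp_rw [Finset.card_filter]
  exact Finset.sum_comm

lemma sum_comp_fiber {α : Type*} (S : Finset α) (g : α → ℕ) (f : ℕ → ℕ) (n : ℕ)
    (hg : ∀ x ∈ S, g x < n) :
    ∑ x ∈ S, f (g x) = ∑ s ∈ Finset.range n, (S.filter fun x => g x = s).card * f s := by
  classical
  rw [← Finset.sum_fiberwise_of_maps_to (g := g) (fun x hx => Finset.mem_range.2 (hg x hx))]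
  refine Finset.sum_congr rfl fun s _ => ?_
  rw [Finset.sum_congr rfl (fun x hx => by rw [(Finset.mem_filter.mp hx).2]),
    Finset.sum_const, smul_eq_mul]

/-- Partial move: there are vertices on a geodesic between any two vertices. -/
lemma hamming_exists_between {γ β : I → Fin q} {k j : ℕ} (hd : hammingDist γ β = k) (hj : j ≤ k) :
    ∃ γ' : I → Fin q, hammingDist γ γ' = k - j ∧ hammingDist γ' β = j := by
  classical
  set D := Finset.univ.filter fun i => γ i ≠ β i with hD
  have hDcard : D.card = k := hd
  obtain ⟨T, hTD, hT⟩ := Finset.exists_subset_card_eq (s := D) (n := k - j) (by omega)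
  refine ⟨fun x => if x ∈ T then β x else γ x, ?_, ?_⟩
  · have : (Finset.univ.filter fun x => γ x ≠ if x ∈ T then β x else γ x) = T := by
      ext x
      by_cases hx : x ∈ T
      · have : γ x ≠ β x := by
          have := hTD hx
          rw [hD] at this
          simpa using this
        simp [hx, this]
      · simp [hx]
    rw [hammingDist_def, this, hT]
  · have : (Finset.univ.filter fun x => (if x ∈ T then β x else γ x) ≠ β x) = D \ T := by
      ext x
      by_cases hx : x ∈ T
      · simp [hx]
      · simp [hx, hD]
    rw [hammingDist_def, this, Finset.card_sdiff_of_subset hTD, hDcard, hT]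
    omega

lemma cell_nonempty {C : Set (I → Fin q)} (hC : C.Nonempty) (hq : 0 < q) {i : ℕ}
    (hi : i ≤ covRad C) : (cell C i).Nonempty := by
  obtain ⟨γ, hγ⟩ := exists_covRad hC hq
  obtain ⟨β, hβ, hd⟩ := exists_nearest hC γ
  rw [hγ] at hd
  obtain ⟨γ', hγγ', hγ'β⟩ := hamming_exists_between hd hi
  refine ⟨γ', le_antisymm ?_ ?_⟩
  · exact le_trans (distC_le hβ) (le_of_eq hγ'β)
  · have h1 := distC_triangle hC γ γ'
    rw [hγ, hγγ'] at h1
    omega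

/-- The finset of elements of a set of vertices. -/
noncomputable def CF (C : Set (I → Fin q)) : Finset (I → Fin q) :=
  (Set.toFinite C).toFinset

lemma mem_CF {C : Set (I → Fin q)} {β : I → Fin q} : β ∈ CF C ↔ β ∈ C :=
  Set.Finite.mem_toFinset _

lemma ncard_filter_eq (C : Set (I → Fin q)) (P : (I → Fin q) → Prop) [DecidablePred P] :
    {β ∈ C | P β}.ncard = ((CF C).filter P).card := by
  have h : {β ∈ C | P β} = ↑((CF C).filter P) := by
    ext β
    simp [CF, Set.Finite.mem_toFinset]
  rw [h, Set.ncard_coe_finset]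

/-- Number of codewords of `C` at distance `k` from `γ`. -/
noncomputable def NkC (C : Set (I → Fin q)) (γ : I → Fin q) (k : ℕ) : ℕ :=
  ((CF C).filter fun β => hammingDist γ β = k).card

/-- Number of neighbours of `γ` lying in the cell `C_j`. -/
noncomputable def eC (C : Set (I → Fin q)) (γ : I → Fin q) (j : ℕ) : ℕ :=
  ((nbr γ).filter fun δ => distC δ C = j).card

open Classical in
/-- A witness vertex in the cell `C_c`. -/
noncomputable def wit (C : Set (I → Fin q)) (hC : C.Nonempty) (c : ℕ) : I → Fin q :=
  if h : (cell C c).Nonempty then h.choose else hC.choose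

lemma wit_mem {C : Set (I → Fin q)} (hC : C.Nonempty) (hq : 0 < q) {c : ℕ}
    (hc : c ≤ covRad C) : wit C hC c ∈ cell C c := by
  unfold wit
  rw [dif_pos (cell_nonempty hC hq hc)]
  exact (cell_nonempty hC hq hc).choose_spec

lemma wit_dist {C : Set (I → Fin q)} (hC : C.Nonempty) (hq : 0 < q) {c : ℕ}
    (hc : c ≤ covRad C) : distC (wit C hC c) C = c :=
  wit_mem hC hq hc

lemma Nk_congr {C : Set (I → Fin q)} (hcr : ComplRegular C) {i : ℕ} (hi : i ≤ covRad C)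
    {γ γ' : I → Fin q} (hγ : γ ∈ cell C i) (hγ' : γ' ∈ cell C i) (k : ℕ) :
    NkC C γ k = NkC C γ' k := by
  have h := hcr i hi γ hγ γ' hγ' k
  rw [ncard_filter_eq, ncard_filter_eq] at h
  exact h

lemma Nk_zero {C : Set (I → Fin q)} {γ : I → Fin q} {k : ℕ} (hk : k < distC γ C) :
    NkC C γ k = 0 := by
  unfold NkC
  rw [Finset.card_eq_zero, Finset.filter_eq_empty_iff]
  intro β hβ hd
  have := distC_le (mem_CF.mp hβ) (γ := γ)
  omega

lemma Nk_pos {C : Set (I → Fin q)} (hC : C.Nonempty) (γ : I → Fin q) :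
    0 < NkC C γ (distC γ C) := by
  obtain ⟨β, hβ, hd⟩ := exists_nearest hC γ
  exact Finset.card_pos.mpr ⟨β, Finset.mem_filter.mpr ⟨mem_CF.mpr hβ, hd⟩⟩

lemma nbr_symm {γ δ : I → Fin q} (h : δ ∈ nbr γ) : hammingDist δ γ = 1 := by
  unfold nbr at h
  simp only [Finset.mem_filter, Finset.mem_univ, true_and] at h
  rwa [hammingDist_comm]

lemma distC_nbr {C : Set (I → Fin q)} (hC : C.Nonempty) {γ δ : I → Fin q} (h : δ ∈ nbr γ) :
    distC δ C ≤ distC γ C + 1 ∧ distC γ C ≤ distC δ C + 1 := by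
  have h1 := distC_triangle hC δ γ
  have h2 := distC_triangle hC γ δ
  have hd : hammingDist γ δ = 1 := by
    unfold nbr at h
    simpa using h
  rw [nbr_symm h] at h1
  rw [hd] at h2
  omega

lemma e_zero {C : Set (I → Fin q)} (hC : C.Nonempty) {γ : I → Fin q} {j : ℕ}
    (h : j + 1 < distC γ C ∨ distC γ C + 1 < j ∨ covRad C < j) : eC C γ j = 0 := by
  unfold eC
  rw [Finset.card_eq_zero, Finset.filter_eq_empty_iff]
  intro δ hδ hd
  have hb := distC_nbr hC hδ
  have hρ := distC_le_covRad hC δ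
  omega

lemma sum_cancel_single {n c0 : ℕ} (hc0 : c0 ∈ Finset.range n) {f g : ℕ → ℕ}
    (h : ∑ c ∈ Finset.range n, f c = ∑ c ∈ Finset.range n, g c)
    (hfg : ∀ c ∈ Finset.range n, c ≠ c0 → f c = g c) : f c0 = g c0 := by
  rw [← Finset.add_sum_erase _ f hc0, ← Finset.add_sum_erase _ g hc0] at h
  have he : ∑ c ∈ (Finset.range n).erase c0, f c = ∑ c ∈ (Finset.range n).erase c0, g c :=
    Finset.sum_congr rfl fun c hc =>
      hfg c (Finset.mem_of_mem_erase hc) (Finset.ne_of_mem_erase hc)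
  omega

lemma master (C : Set (I → Fin q)) (γ : I → Fin q) (t : ℕ) :
    ∑ δ ∈ nbr γ, NkC C δ t
      = ∑ β ∈ CF C, chi (Fintype.card I) q t (hammingDist γ β) := by
  classical
  unfold NkC
  rw [double_count (nbr γ) (CF C) (fun δ β => hammingDist δ β = t)]
  exact Finset.sum_congr rfl fun β _ => nbr_count γ β t

lemma nbr_card (γ : I → Fin q) : (nbr γ).card = Fintype.card I * (q - 1) := by
  have h := nbr_count γ γ 1
  have hfe : ((nbr γ).filter fun δ => hammingDist δ γ = 1) = nbr γ :=
    Finset.filter_true_of_mem fun δ hδ => nbr_symm hδ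
  rw [hfe, hammingDist_self] at h
  rw [h]
  norm_num [chi]

lemma nbr_decomp {C : Set (I → Fin q)} (hC : C.Nonempty) (γ : I → Fin q) :
    (nbr γ).card = ∑ c ∈ Finset.range (covRad C + 1), eC C γ c := by
  have h := sum_comp_fiber (nbr γ) (fun δ => distC δ C) (fun _ => 1) (covRad C + 1)
    (fun δ _ => Nat.lt_succ_of_le (distC_le_covRad hC δ))
  simp only [mul_one] at h
  rw [Finset.sum_const, smul_eq_mul, mul_one] at h
  exact h

lemma master_cells {C : Set (I → Fin q)} (hC : C.Nonempty) (hq : 0 < q)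
    (hcr : ComplRegular C) {i : ℕ} (hi : i ≤ covRad C) {γ : I → Fin q}
    (hγ : γ ∈ cell C i) (t : ℕ) :
    ∑ c ∈ Finset.range (covRad C + 1), eC C γ c * NkC C (wit C hC c) t
      = ∑ s ∈ Finset.range (Fintype.card I + 1),
          NkC C (wit C hC i) s * chi (Fintype.card I) q t s := by
  classical
  have hL : ∑ δ ∈ nbr γ, NkC C δ t
      = ∑ c ∈ Finset.range (covRad C + 1), eC C γ c * NkC C (wit C hC c) t := by
    have h1 : ∑ δ ∈ nbr γ, NkC C δ t
        = ∑ δ ∈ nbr γ, NkC C (wit C hC (distC δ C)) t := by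
      refine Finset.sum_congr rfl fun δ _ => ?_
      have hδρ : distC δ C ≤ covRad C := distC_le_covRad hC δ
      exact Nk_congr hcr hδρ rfl (wit_mem hC hq hδρ) t
    have h2 := sum_comp_fiber (nbr γ) (fun δ => distC δ C)
      (fun c => NkC C (wit C hC c) t) (covRad C + 1)
      (fun δ _ => Nat.lt_succ_of_le (distC_le_covRad hC δ))
    rw [h1, h2]
    rfl
  have hR : ∑ β ∈ CF C, chi (Fintype.card I) q t (hammingDist γ β)
      = ∑ s ∈ Finset.range (Fintype.card I + 1),
          NkC C (wit C hC i) s * chi (Fintype.card I) q t s := by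
    have h2 := sum_comp_fiber (CF C) (fun β => hammingDist γ β)
      (chi (Fintype.card I) q t) (Fintype.card I + 1)
      (fun β _ => Nat.lt_succ_of_le hammingDist_le_card_fintype)
    rw [h2]
    refine Finset.sum_congr rfl fun s _ => ?_
    congr 1
    exact Nk_congr hcr hi hγ (wit_mem hC hq hi) s
  rw [← hL, ← hR]
  exact master C γ t

lemma equitable {C : Set (I → Fin q)} (hC : C.Nonempty) (hq : 0 < q)
    (hcr : ComplRegular C) {i : ℕ} (hi : i ≤ covRad C) {γ γ'' : I → Fin q}
    (hγ : γ ∈ cell C i) (hγ'' : γ'' ∈ cell C i) : ∀ j, eC C γ j = eC C γ'' j := by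
  have hdγ : distC γ C = i := hγ
  have hdγ'' : distC γ'' C = i := hγ''
  have key : ∀ t, ∑ c ∈ Finset.range (covRad C + 1), eC C γ c * NkC C (wit C hC c) t
      = ∑ c ∈ Finset.range (covRad C + 1), eC C γ'' c * NkC C (wit C hC c) t := by
    intro t
    rw [master_cells hC hq hcr hi hγ t, master_cells hC hq hcr hi hγ'' t]
  have hdown : ∀ j, j + 1 = i → eC C γ j = eC C γ'' j := by
    intro j hij
    have hjρ : j ≤ covRad C := by omega
    have hFjj : 0 < NkC C (wit C hC j) j := by
      have := Nk_pos hC (wit C hC j)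
      rwa [wit_dist hC hq hjρ] at this
    refine Nat.eq_of_mul_eq_mul_right hFjj ?_
    refine sum_cancel_single (n := covRad C + 1) (c0 := j)
      (Finset.mem_range.2 (by omega)) (key j) ?_
    intro c hc hcj
    rcases lt_or_gt_of_ne hcj with hlt | hgt
    · rw [e_zero hC (Or.inl (by omega)), e_zero hC (Or.inl (by omega))]
    · have hcρ : c ≤ covRad C := by simp only [Finset.mem_range] at hc; omega
      have hz : NkC C (wit C hC c) j = 0 := Nk_zero (by rw [wit_dist hC hq hcρ]; omega)
      rw [hz, mul_zero, mul_zero]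
  have hmid : eC C γ i = eC C γ'' i := by
    have hFii : 0 < NkC C (wit C hC i) i := by
      have := Nk_pos hC (wit C hC i)
      rwa [wit_dist hC hq hi] at this
    refine Nat.eq_of_mul_eq_mul_right hFii ?_
    refine sum_cancel_single (n := covRad C + 1) (c0 := i)
      (Finset.mem_range.2 (by omega)) (key i) ?_
    intro c hc hci
    rcases lt_or_gt_of_ne hci with hlt | hgt
    · by_cases hc1 : c + 1 = i
      · rw [hdown c hc1]
      · rw [e_zero hC (Or.inl (by omega)), e_zero hC (Or.inl (by omega))]
    · have hcρ : c ≤ covRad C := by simp only [Finset.mem_range] at hc; omega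
      have hz : NkC C (wit C hC c) i = 0 := Nk_zero (by rw [wit_dist hC hq hcρ]; omega)
      rw [hz, mul_zero, mul_zero]
  have hup : eC C γ (i + 1) = eC C γ'' (i + 1) := by
    by_cases hiρ : i + 1 ≤ covRad C
    · have hdeg : ∑ c ∈ Finset.range (covRad C + 1), eC C γ c
          = ∑ c ∈ Finset.range (covRad C + 1), eC C γ'' c := by
        rw [← nbr_decomp hC γ, ← nbr_decomp hC γ'', nbr_card, nbr_card]
      refine sum_cancel_single (n := covRad C + 1) (c0 := i + 1)
        (Finset.mem_range.2 (by omega)) hdeg ?_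
      intro c hc hci
      by_cases hc1 : c + 1 = i
      · exact hdown c hc1
      · by_cases hc2 : c = i
        · rw [hc2]; exact hmid
        · rw [e_zero hC (by omega), e_zero hC (by omega)]
    · rw [e_zero hC (Or.inr (Or.inr (by omega))), e_zero hC (Or.inr (Or.inr (by omega)))]
  intro j
  by_cases h1 : j + 1 = i
  · exact hdown j h1
  · by_cases h2 : j = i
    · rw [h2]; exact hmid
    · by_cases h3 : j = i + 1
      · rw [h3]; exact hup
      · rw [e_zero hC (by omega), e_zero hC (by omega)]

lemma e_pos_down {C : Set (I → Fin q)} (hC : C.Nonempty) {i : ℕ} {γ : I → Fin q}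
    (hγ : γ ∈ cell C (i + 1)) : 0 < eC C γ i := by
  have hdγ : distC γ C = i + 1 := hγ
  obtain ⟨β, hβ, hd⟩ := exists_nearest hC γ
  rw [hdγ] at hd
  obtain ⟨δ, hγδ, hδβ⟩ := hamming_exists_between hd (Nat.le_succ i)
  have hδd : distC δ C = i := by
    have h1 : distC δ C ≤ i := le_trans (distC_le hβ) (le_of_eq hδβ)
    have h2 := distC_triangle hC γ δ
    rw [hdγ, hγδ] at h2
    omega
  refine Finset.card_pos.mpr ⟨δ, Finset.mem_filter.mpr ⟨?_, hδd⟩⟩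
  unfold nbr
  simp only [Finset.mem_filter, Finset.mem_univ, true_and]
  omega

lemma e_pos_up {C : Set (I → Fin q)} (hC : C.Nonempty) (hq : 0 < q)
    (hcr : ComplRegular C) {i : ℕ} (hi : i < covRad C) {γ : I → Fin q}
    (hγ : γ ∈ cell C i) : 0 < eC C γ (i + 1) := by
  classical
  -- double count edges between C_i and C_{i+1}
  have hkey : ∀ (γ0 : I → Fin q) (j : ℕ),
      eC C γ0 j = ((CF (cell C j)).filter fun δ => hammingDist γ0 δ = 1).card := by
    intro γ0 j
    unfold eC
    congr 1
    ext δ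
    unfold nbr
    simp only [Finset.mem_filter, Finset.mem_univ, true_and, mem_CF]
    rw [and_comm]
    rfl
  have hdc : ∑ γ0 ∈ CF (cell C i), eC C γ0 (i + 1)
      = ∑ δ ∈ CF (cell C (i + 1)), eC C δ i := by
    calc ∑ γ0 ∈ CF (cell C i), eC C γ0 (i + 1)
        = ∑ γ0 ∈ CF (cell C i),
            ((CF (cell C (i + 1))).filter fun δ => hammingDist γ0 δ = 1).card :=
          Finset.sum_congr rfl fun γ0 _ => hkey γ0 (i + 1)
      _ = ∑ δ ∈ CF (cell C (i + 1)),
            ((CF (cell C i)).filter fun γ0 => hammingDist γ0 δ = 1).card :=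
          double_count _ _ _
      _ = ∑ δ ∈ CF (cell C (i + 1)), eC C δ i := by
          refine Finset.sum_congr rfl fun δ _ => ?_
          rw [hkey δ i]
          congr 1
          ext γ0
          simp only [Finset.mem_filter, and_congr_right_iff]
          intro _
          rw [hammingDist_comm]
  have hrpos : 0 < ∑ δ ∈ CF (cell C (i + 1)), eC C δ i := by
    obtain ⟨δ0, hδ0⟩ := cell_nonempty hC hq (show i + 1 ≤ covRad C by omega)
    refine Finset.sum_pos' (fun _ _ => Nat.zero_le _) ⟨δ0, mem_CF.mpr hδ0, ?_⟩
    exact e_pos_down hC hδ0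
  rw [← hdc] at hrpos
  by_contra hcon
  have hz : ∀ γ0 ∈ CF (cell C i), eC C γ0 (i + 1) = 0 := by
    intro γ0 hγ0
    have := equitable hC hq hcr (le_of_lt hi) (mem_CF.mp hγ0) hγ (i + 1)
    omega
  rw [Finset.sum_eq_zero hz] at hrpos
  exact absurd hrpos (lt_irrefl 0)

lemma dist_last {C : Set (I → Fin q)} (hC : C.Nonempty) (hq : 0 < q)
    (hcr : ComplRegular C) (γ : I → Fin q) :
    distC γ (cell C (covRad C)) = covRad C - distC γ C := by
  have hiρ : distC γ C ≤ covRad C := distC_le_covRad hC γ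
  have hup : ∀ k, distC γ C + k ≤ covRad C →
      ∃ δ, distC δ C = distC γ C + k ∧ hammingDist γ δ ≤ k := by
    intro k
    induction k with
    | zero => intro _; exact ⟨γ, by omega, by rw [hammingDist_self]⟩
    | succ k ih =>
      intro hk
      obtain ⟨δ, hδ, hdγδ⟩ := ih (by omega)
      have hδcell : δ ∈ cell C (distC γ C + k) := hδ
      have hpos := e_pos_up hC hq hcr (show distC γ C + k < covRad C by omega) hδcell
      obtain ⟨δ', hδ'⟩ := Finset.card_pos.mp hpos
      rw [Finset.mem_filter] at hδ'
      obtain ⟨hδ'n, hδ'd⟩ := hδ'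
      have hdd : hammingDist δ δ' = 1 := by
        unfold nbr at hδ'n
        simpa using hδ'n
      refine ⟨δ', by omega, ?_⟩
      have := hammingDist_triangle γ δ δ'
      omega
  obtain ⟨δρ, hδρ, hdist⟩ := hup (covRad C - distC γ C) (by omega)
  have hδρcell : δρ ∈ cell C (covRad C) := show distC δρ C = covRad C by omega
  apply le_antisymm
  · exact le_trans (distC_le hδρcell) hdist
  · refine le_csInf ⟨_, δρ, hδρcell, rfl⟩ ?_
    rintro d ⟨δ, hδ, rfl⟩
    have h2 := distC_triangle hC δ γ
    have hδc : distC δ C = covRad C := hδ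
    have hcomm : hammingDist δ γ = hammingDist γ δ := hammingDist_comm _ _
    omega

lemma covRad_last {C : Set (I → Fin q)} (hC : C.Nonempty) (hq : 0 < q)
    (hcr : ComplRegular C) : covRad (cell C (covRad C)) = covRad C := by
  have hρ : (cell C (covRad C)).Nonempty := cell_nonempty hC hq le_rfl
  apply le_antisymm
  · refine csSup_le ⟨distC hC.choose (cell C (covRad C)), hC.choose, rfl⟩ ?_
    rintro d ⟨γ, rfl⟩
    rw [dist_last hC hq hcr γ]
    exact le_trans (Nat.sub_le _ _) le_rfl
  · have h0 : distC hC.choose (cell C (covRad C)) = covRad C := by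
      rw [dist_last hC hq hcr]
      have : distC hC.choose C = 0 := (distC_eq_zero_iff hC).mpr hC.choose_spec
      omega
    refine le_csSup ⟨Fintype.card I, ?_⟩ ⟨hC.choose, h0⟩
    rintro d ⟨γ, rfl⟩
    exact distC_le_card hρ γ

lemma cells_last {C : Set (I → Fin q)} (hC : C.Nonempty) (hq : 0 < q)
    (hcr : ComplRegular C) {i : ℕ} (hi : i ≤ covRad C) :
    cell (cell C (covRad C)) i = cell C (covRad C - i) := by
  ext γ
  show distC γ (cell C (covRad C)) = i ↔ distC γ C = covRad C - i
  rw [dist_last hC hq hcr γ]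
  have := distC_le_covRad hC γ
  omega

/-- Number of vertices of the cell `C_j` at distance `k` from `γ`. -/
noncomputable def GC (C : Set (I → Fin q)) (γ : I → Fin q) (j k : ℕ) : ℕ :=
  ((CF (cell C j)).filter fun β => hammingDist γ β = k).card

lemma master_any (S : Finset (I → Fin q)) (γ : I → Fin q) (t : ℕ) :
    ∑ δ ∈ nbr γ, (S.filter fun β => hammingDist δ β = t).card
      = ∑ β ∈ S, chi (Fintype.card I) q t (hammingDist γ β) := by
  classical
  rw [double_count (nbr γ) S (fun δ β => hammingDist δ β = t)]
  exact Finset.sum_congr rfl fun β _ => nbr_count γ β t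

lemma G_zero_big {C : Set (I → Fin q)} (γ : I → Fin q) {j k : ℕ}
    (hk : Fintype.card I < k) : GC C γ j k = 0 := by
  unfold GC
  rw [Finset.card_eq_zero, Finset.filter_eq_empty_iff]
  intro β _ hd
  have : hammingDist γ β ≤ Fintype.card I := hammingDist_le_card_fintype
  omega

lemma G_zero_k0 {C : Set (I → Fin q)} (γ : I → Fin q) (j : ℕ) :
    GC C γ j 0 = if distC γ C = j then 1 else 0 := by
  unfold GC
  have hfe : ((CF (cell C j)).filter fun β => hammingDist γ β = 0)
      = if distC γ C = j then {γ} else ∅ := by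
    ext β
    simp only [Finset.mem_filter, mem_CF, hammingDist_eq_zero]
    split_ifs with h
    · constructor
      · rintro ⟨hc, rfl⟩
        simp
      · intro hβ
        rw [Finset.mem_singleton] at hβ
        subst hβ
        exact ⟨h, rfl⟩
    · constructor
      · rintro ⟨hc, rfl⟩
        exact absurd hc h
      · intro hβ
        simp at hβ
  rw [hfe]
  split_ifs <;> simp

lemma G_congr {C : Set (I → Fin q)} (hC : C.Nonempty) (hq : 0 < q) (hcr : ComplRegular C) :
    ∀ k : ℕ, ∀ {i : ℕ}, i ≤ covRad C → ∀ {γ γ'' : I → Fin q},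
      γ ∈ cell C i → γ'' ∈ cell C i → ∀ j, GC C γ j k = GC C γ'' j k := by
  intro k
  induction k using Nat.strong_induction_on with
  | _ k IH =>
    rcases k with _ | k
    · intro i hi γ γ'' hγ hγ'' j
      rw [G_zero_k0, G_zero_k0, show distC γ C = i from hγ, show distC γ'' C = i from hγ'']
    · intro i hi γ γ'' hγ hγ'' j
      have hid : ∀ γ0 : I → Fin q, γ0 ∈ cell C i →
          ∑ c ∈ Finset.range (covRad C + 1), eC C γ0 c * GC C (wit C hC c) j k
            = ∑ s ∈ Finset.range (Fintype.card I + 1),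
                GC C γ0 j s * chi (Fintype.card I) q k s := by
        intro γ0 hγ0
        have h1 : ∑ δ ∈ nbr γ0, GC C δ j k
            = ∑ δ ∈ nbr γ0, GC C (wit C hC (distC δ C)) j k :=
          Finset.sum_congr rfl fun δ _ =>
            IH k (Nat.lt_succ_self k) (distC_le_covRad hC δ) rfl
              (wit_mem hC hq (distC_le_covRad hC δ)) j
        have h2 := sum_comp_fiber (nbr γ0) (fun δ => distC δ C)
          (fun c => GC C (wit C hC c) j k) (covRad C + 1)
          (fun δ _ => Nat.lt_succ_of_le (distC_le_covRad hC δ))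
        have h3 := master_any (CF (cell C j)) γ0 k
        have h4 := sum_comp_fiber (CF (cell C j)) (fun β => hammingDist γ0 β)
          (chi (Fintype.card I) q k) (Fintype.card I + 1)
          (fun β _ => Nat.lt_succ_of_le hammingDist_le_card_fintype)
        calc ∑ c ∈ Finset.range (covRad C + 1), eC C γ0 c * GC C (wit C hC c) j k
            = ∑ δ ∈ nbr γ0, GC C (wit C hC (distC δ C)) j k := h2.symm
          _ = ∑ δ ∈ nbr γ0, GC C δ j k := h1.symm
          _ = ∑ β ∈ CF (cell C j), chi (Fintype.card I) q k (hammingDist γ0 β) := h3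
          _ = ∑ s ∈ Finset.range (Fintype.card I + 1),
                GC C γ0 j s * chi (Fintype.card I) q k s := h4
      have hRR : ∑ s ∈ Finset.range (Fintype.card I + 1),
            GC C γ j s * chi (Fintype.card I) q k s
          = ∑ s ∈ Finset.range (Fintype.card I + 1),
            GC C γ'' j s * chi (Fintype.card I) q k s := by
        rw [← hid γ hγ, ← hid γ'' hγ'']
        exact Finset.sum_congr rfl fun c _ => by
          rw [equitable hC hq hcr hi hγ hγ'' c]
      by_cases hkm : k + 1 ≤ Fintype.card I
      · have hside : ∀ s ∈ Finset.range (Fintype.card I + 1), s ≠ k + 1 →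
            GC C γ j s * chi (Fintype.card I) q k s
              = GC C γ'' j s * chi (Fintype.card I) q k s := by
          intro s hs hsk
          rcases le_or_gt s k with hle | hgt
          · rw [IH s (by omega) hi hγ hγ'' j]
          · have hz : chi (Fintype.card I) q k s = 0 := by
              unfold chi; split_ifs <;> omega
            rw [hz, mul_zero, mul_zero]
        have hcc := sum_cancel_single (n := Fintype.card I + 1) (c0 := k + 1)
          (Finset.mem_range.2 (by omega)) hRR hside
        have hchi : chi (Fintype.card I) q k (k + 1) = k + 1 := by
          unfold chi; rw [if_pos rfl]
        rw [hchi] at hcc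
        exact Nat.eq_of_mul_eq_mul_right (by omega) hcc
      · rw [G_zero_big γ (by omega), G_zero_big γ'' (by omega)]

lemma autH_pres {x : Equiv.Perm (I → Fin q)} (hx : x ∈ autH I q) (α β : I → Fin q) :
    hammingDist (x α) (x β) = hammingDist α β := by
  have hle : ∀ y ∈ autH I q, ∀ k : ℕ, ∀ α β : I → Fin q,
      hammingDist α β = k → hammingDist (y α) (y β) ≤ k := by
    intro y hy k
    induction k with
    | zero =>
      intro α β h
      rw [hammingDist_eq_zero] at h
      subst h
      rw [hammingDist_self]
    | succ k ih =>
      intro α β h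
      obtain ⟨γ', h1, h2⟩ := hamming_exists_between h (Nat.le_succ k)
      have e1 : hammingDist α γ' = 1 := by omega
      have e2 : hammingDist (y α) (y γ') = 1 := (hy α γ').mpr e1
      have e3 := ih γ' β h2
      have := hammingDist_triangle (y α) (y γ') (y β)
      omega
  apply le_antisymm
  · exact hle x hx _ α β rfl
  · have hinv : x⁻¹ ∈ autH I q := (autH I q).inv_mem hx
    have h := hle x⁻¹ hinv _ (x α) (x β) rfl
    simpa using h

lemma stab_distC {D : Set (I → Fin q)} {x : Equiv.Perm (I → Fin q)}
    (hpres : ∀ α β, hammingDist (x α) (x β) = hammingDist α β)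
    (hxD : x • D = D) (γ : I → Fin q) : distC (x γ) D = distC γ D := by
  unfold distC
  congr 1
  ext d
  simp only [Set.mem_setOf_eq]
  constructor
  · rintro ⟨β, hβ, rfl⟩
    rw [← hxD] at hβ
    obtain ⟨a, ha, rfl⟩ := Set.mem_smul_set.mp hβ
    refine ⟨a, ha, ?_⟩
    rw [Equiv.Perm.smul_def]
    exact (hpres γ a).symm
  · rintro ⟨β, hβ, rfl⟩
    exact ⟨x β, by rw [← hxD]; exact Set.smul_mem_smul_set hβ, hpres γ β⟩

lemma stab_cell {D : Set (I → Fin q)} {x : Equiv.Perm (I → Fin q)}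
    (hpres : ∀ α β, hammingDist (x α) (x β) = hammingDist α β)
    (hxD : x • D = D) (i : ℕ) : x • cell D i = cell D i := by
  ext δ
  constructor
  · intro hδ
    obtain ⟨γ, hγ, rfl⟩ := Set.mem_smul_set.mp hδ
    show distC (x • γ) D = i
    rw [Equiv.Perm.smul_def, stab_distC hpres hxD γ]
    exact hγ
  · intro hδ
    rw [Set.mem_smul_set]
    refine ⟨x⁻¹ δ, ?_, show x • (x⁻¹ δ) = δ from Equiv.apply_symm_apply x δ⟩
    show distC (x⁻¹ δ) D = i
    have h := stab_distC hpres hxD (x⁻¹ δ)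
    rw [show x (x⁻¹ δ) = δ from Equiv.apply_symm_apply x δ] at h
    rw [← h]
    exact hδ

end CRAux

/-- Lemma 2.7: if `C` is completely regular with covering radius `ρ`,
then `C_ρ` is completely regular with the reversed distance partition,
`Aut(C) = Aut(C_ρ)`, and `C` is `X`-completely transitive iff `C_ρ` is. -/
theorem completely_regular_last_cell {m q : ℕ} (hm : 2 ≤ m) (hq : 2 ≤ q)
    (C : Set (Fin m → Fin q)) (hC : C.Nonempty) (hcr : ComplRegular C) :
    ComplRegular (cell C (covRad C)) ∧
    covRad (cell C (covRad C)) = covRad C ∧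
    (∀ i ≤ covRad C, cell (cell C (covRad C)) i = cell C (covRad C - i)) ∧
    autCode C = autCode (cell C (covRad C)) ∧
    (∀ X : Subgroup (Equiv.Perm (Fin m → Fin q)),
      ComplTransitive X C ↔ ComplTransitive X (cell C (covRad C))) := by
  have hq0 : 0 < q := by omega
  have hC' : (cell C (covRad C)).Nonempty := cell_nonempty hC hq0 le_rfl
  have hcells : ∀ i ≤ covRad C, cell (cell C (covRad C)) i = cell C (covRad C - i) :=
    fun i hi => cells_last hC hq0 hcr hi
  have hcov : covRad (cell C (covRad C)) = covRad C := covRad_last hC hq0 hcr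
  have hback : cell (cell C (covRad C)) (covRad C) = C := by
    rw [hcells (covRad C) le_rfl, Nat.sub_self, cell_zero hC]
  refine ⟨?_, hcov, hcells, ?_, ?_⟩
  · -- complete regularity of the last cell
    intro i hi γ hγ γ' hγ' k
    rw [hcov] at hi
    rw [hcells i hi] at hγ hγ'
    rw [ncard_filter_eq, ncard_filter_eq]
    exact G_congr hC hq0 hcr k (Nat.sub_le _ _) hγ hγ' (covRad C)
  · -- Aut(C) = Aut(C_ρ)
    ext x
    simp only [autCode, Subgroup.mem_inf, MulAction.mem_stabilizer_iff]
    constructor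
    · rintro ⟨hxH, hxC⟩
      exact ⟨hxH, stab_cell (autH_pres hxH) hxC (covRad C)⟩
    · rintro ⟨hxH, hxC'⟩
      refine ⟨hxH, ?_⟩
      have h1 := stab_cell (autH_pres hxH) hxC' (covRad C)
      rwa [hback] at h1
  · -- complete transitivity transfer
    intro X
    constructor
    · rintro ⟨hX, horb⟩
      refine ⟨hX, fun i hi => ?_⟩
      rw [hcov] at hi
      rw [hcells i hi]
      exact horb (covRad C - i) (Nat.sub_le _ _)
    · rintro ⟨hX, horb⟩
      refine ⟨hX, fun i hi => ?_⟩
      have h1 : cell (cell C (covRad C)) (covRad C - i) = cell C i := by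
        rw [hcells (covRad C - i) (Nat.sub_le _ _), Nat.sub_sub_self hi]
      rw [← h1]
      exact horb (covRad C - i) (by rw [hcov]; exact Nat.sub_le _ _)
end

section
/- Let C be an X-neighbour transitive code in H(m,q) with minimum distance δ ≥ 2 such that for some codeword α ∈ C the stabiliser X_α acts transitively on the set Γ_1(α) of vertices at Hamming distance 1 from α. Then for every positive integer p, the p-fold repetition code Rep_p(C) is (X × S_p)-neighbour transitive in H(mp,q). -/
open Equiv Pointwise

section AuxLemmas

variable {I : Type*} [Fintype I] [DecidableEq I] {q : ℕ}

private lemma hd_eq_sum (x y : I → Fin q) :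
    hammingDist x y = ∑ i, if x i ≠ y i then 1 else 0 := by
  simp [hammingDist, Finset.card_filter]

private lemma exists_step {x y : I → Fin q} {d : ℕ} (h : hammingDist x y = d + 1) :
    ∃ z : I → Fin q, hammingDist x z = 1 ∧ hammingDist z y = d := by
  have hne : (Finset.univ.filter fun i => x i ≠ y i).Nonempty := by
    rw [← Finset.card_pos]
    show 0 < hammingDist x y
    omega
  obtain ⟨k, hk⟩ := hne
  simp only [Finset.mem_filter, Finset.mem_univ, true_and] at hk
  refine ⟨Function.update x k (y k), ?_, ?_⟩
  · show (Finset.univ.filter fun i => x i ≠ Function.update x k (y k) i).card = 1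
    rw [Finset.card_eq_one]
    refine ⟨k, ?_⟩
    ext j
    by_cases hj : j = k <;> simp [hj, Function.update_apply, Ne.symm hk, hk]
  · have hf : (Finset.univ.filter fun i => Function.update x k (y k) i ≠ y i)
        = (Finset.univ.filter fun i => x i ≠ y i).erase k := by
      ext j
      by_cases hj : j = k <;> simp [hj, Function.update_apply]
    show (Finset.univ.filter fun i => Function.update x k (y k) i ≠ y i).card = d
    rw [hf, Finset.card_erase_of_mem (by simp [hk])]
    show hammingDist x y - 1 = d
    omega

private lemma autH_le {x : Equiv.Perm (I → Fin q)} (hx : x ∈ autH I q) :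
    ∀ n (a b : I → Fin q), hammingDist a b = n → hammingDist (x a) (x b) ≤ n := by
  intro n
  induction n with
  | zero =>
    intro a b h
    rw [hammingDist_eq_zero] at h
    subst h
    simp
  | succ d ih =>
    intro a b h
    obtain ⟨z, h1, h2⟩ := exists_step h
    have hxz : hammingDist (x a) (x z) = 1 := (hx a z).mpr h1
    calc hammingDist (x a) (x b) ≤ hammingDist (x a) (x z) + hammingDist (x z) (x b) :=
        hammingDist_triangle _ _ _
      _ ≤ 1 + d := by
        have := ih z b h2
        omega
      _ = d + 1 := by omega

private lemma autH_isom {x : Equiv.Perm (I → Fin q)} (hx : x ∈ autH I q)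
    (a b : I → Fin q) : hammingDist (x a) (x b) = hammingDist a b := by
  have h1 := autH_le hx (hammingDist a b) a b rfl
  have h2 := autH_le ((autH I q).inv_mem hx) (hammingDist (x a) (x b)) (x a) (x b) rfl
  simp only [Equiv.Perm.coe_inv, Equiv.symm_apply_apply] at h2
  omega

private lemma dist_blocks {p : ℕ} (β γ : Fin p × I → Fin q) :
    hammingDist β γ = ∑ j : Fin p, hammingDist (fun i => β (j, i)) (fun i => γ (j, i)) := by
  simp only [hd_eq_sum]
  rw [Fintype.sum_prod_type]

private lemma repHom_apply {p : ℕ} (x : Equiv.Perm (I → Fin q)) (σ : Equiv.Perm (Fin p))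
    (β : Fin p × I → Fin q) (j : Fin p) (i : I) :
    repHom p I q (x, σ) β (j, i) = x (fun i' => β (σ⁻¹ j, i')) i := rfl

private lemma repHom_dist {p : ℕ} {x : Equiv.Perm (I → Fin q)} (σ : Equiv.Perm (Fin p))
    (hx : ∀ a b : I → Fin q, hammingDist (x a) (x b) = hammingDist a b)
    (β γ : Fin p × I → Fin q) :
    hammingDist (repHom p I q (x, σ) β) (repHom p I q (x, σ) γ) = hammingDist β γ := by
  rw [dist_blocks, dist_blocks β γ]
  have key : ∀ j : Fin p,
      hammingDist (fun i => repHom p I q (x, σ) β (j, i))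
        (fun i => repHom p I q (x, σ) γ (j, i))
      = hammingDist (fun i => β (σ⁻¹ j, i)) (fun i => γ (σ⁻¹ j, i)) := fun j =>
    hx (fun i' => β (σ⁻¹ j, i')) (fun i' => γ (σ⁻¹ j, i'))
  simp_rw [key]
  exact Equiv.sum_comp σ⁻¹ fun j => hammingDist (fun i => β (j, i)) (fun i => γ (j, i))

private lemma repHom_repv {p : ℕ} (x : Equiv.Perm (I → Fin q)) (σ : Equiv.Perm (Fin p))
    (β : I → Fin q) : repHom p I q (x, σ) (repv p β) = repv p (x β) := rfl

private lemma orbit_of_mem {J : Type*} [Fintype J] [DecidableEq J]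
    {X : Subgroup (Equiv.Perm (J → Fin q))} {S : Set (J → Fin q)}
    (h : IsOrbitOf X S) {a : J → Fin q} (ha : a ∈ S) :
    S = {w | ∃ x ∈ X, x a = w} := by
  obtain ⟨v, rfl⟩ := h
  obtain ⟨x₀, hx₀, hx₀a⟩ := ha
  ext b
  constructor
  · rintro ⟨x, hx, rfl⟩
    exact ⟨x * x₀⁻¹, mul_mem hx (inv_mem hx₀), by simp [← hx₀a]⟩
  · rintro ⟨x, hx, rfl⟩
    exact ⟨x * x₀, mul_mem hx hx₀, by simp [hx₀a]⟩

private lemma dist_update {J : Type*} [Fintype J] [DecidableEq J] (f : J → Fin q) (k : J)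
    (b : Fin q) (hb : b ≠ f k) : hammingDist (Function.update f k b) f = 1 := by
  show (Finset.univ.filter fun j => Function.update f k b j ≠ f j).card = 1
  rw [Finset.card_eq_one]
  refine ⟨k, ?_⟩
  ext j
  by_cases hj : j = k <;> simp [hj, Function.update_apply, hb]

private lemma eq_update_of_dist_one {J : Type*} [Fintype J] [DecidableEq J]
    {f g : J → Fin q} (h : hammingDist f g = 1) :
    ∃ k, f k ≠ g k ∧ f = Function.update g k (f k) := by
  have h' : (Finset.univ.filter fun j => f j ≠ g j).card = 1 := h
  obtain ⟨k, hk⟩ := Finset.card_eq_one.mp h'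
  have hmem : ∀ j, f j ≠ g j ↔ j = k := by
    intro j
    have hiff : j ∈ Finset.univ.filter (fun j => f j ≠ g j) ↔ j ∈ ({k} : Finset J) := by
      rw [hk]
    simpa using hiff
  refine ⟨k, (hmem k).mpr rfl, ?_⟩
  funext j
  by_cases hj : j = k
  · subst hj; simp
  · rw [Function.update_apply, if_neg hj]
    by_contra hne
    exact hj ((hmem j).mp hne)

private lemma distC_eq_one_iff {J : Type*} [Fintype J] [DecidableEq J]
    {ν : J → Fin q} {D : Set (J → Fin q)} (hD : D.Nonempty) :
    distC ν D = 1 ↔ (∃ β ∈ D, hammingDist ν β = 1) ∧ ν ∉ D := by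
  obtain ⟨β₀, hβ₀⟩ := hD
  have hne : {d | ∃ β ∈ D, hammingDist ν β = d}.Nonempty := ⟨_, β₀, hβ₀, rfl⟩
  have hmemD : ν ∈ D ↔ (0 ∈ {d | ∃ β ∈ D, hammingDist ν β = d}) := by
    constructor
    · intro hν; exact ⟨ν, hν, hammingDist_self ν⟩
    · rintro ⟨β, hβ, hd⟩
      rw [hammingDist_eq_zero] at hd
      rwa [hd]
  constructor
  · intro h
    have h' : sInf {d | ∃ β ∈ D, hammingDist ν β = d} = 1 := h
    have h1 : 1 ∈ {d | ∃ β ∈ D, hammingDist ν β = d} := h' ▸ Nat.sInf_mem hne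
    refine ⟨h1, fun hν => ?_⟩
    have := Nat.sInf_le (hmemD.mp hν)
    rw [h'] at this
    omega
  · rintro ⟨h1, h0⟩
    have hle : sInf {d | ∃ β ∈ D, hammingDist ν β = d} ≤ 1 := Nat.sInf_le h1
    have hpos : sInf {d | ∃ β ∈ D, hammingDist ν β = d} ≠ 0 := by
      intro hz
      exact h0 (hmemD.mpr (hz ▸ Nat.sInf_mem hne))
    show sInf {d | ∃ β ∈ D, hammingDist ν β = d} = 1
    omega

end AuxLemmas

/-- Lemma 2.10: if `C` is `X`-neighbour transitive with minimum
distance `δ ≥ 2` and some stabiliser `X_α` (`α ∈ C`) is transitive on `Γ_1(α)`, then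
`Rep_p(C)` is `(X × S_p)`-neighbour transitive in `H(mp,q)`. -/
theorem rep_code_neighbour_transitive (m q p : ℕ) (hm : 2 ≤ m) (hq : 2 ≤ q) (hp : 0 < p)
    (C : Set (Fin m → Fin q)) (X : Subgroup (Equiv.Perm (Fin m → Fin q)))
    (hnt : NbrTransitive X C)
    (hdelta : ∀ β ∈ C, ∀ γ ∈ C, β ≠ γ → 2 ≤ hammingDist β γ)
    (α : Fin m → Fin q) (hα : α ∈ C)
    (hstab : ∀ ν ν' : Fin m → Fin q, hammingDist ν α = 1 → hammingDist ν' α = 1 →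
      ∃ x ∈ X, x α = α ∧ x ν = ν') :
    NbrTransitive (Subgroup.map (repHom p (Fin m) q) (X.prod ⊤)) (repCodeP p C) := by
  obtain ⟨hXaut, hCorb, hC1orb⟩ := hnt
  have hCα : C = {w | ∃ x ∈ X, x α = w} := orbit_of_mem hCorb hα
  have hCclosed : ∀ β ∈ C, ∀ x ∈ X, x β ∈ C := by
    intro β hβ x hx
    rw [hCα] at hβ ⊢
    obtain ⟨x', hx', rfl⟩ := hβ
    exact ⟨x * x', mul_mem hx hx', by simp⟩
  have hisom : ∀ x ∈ X, ∀ a b : Fin m → Fin q, hammingDist (x a) (x b) = hammingDist a b :=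
    fun x hx => autH_isom (hXaut hx)
  have hDne : (repCodeP p C).Nonempty := ⟨repv p α, α, hα, rfl⟩
  have hnotD : ∀ ν : Fin p × Fin m → Fin q,
      (∃ β ∈ C, hammingDist ν (repv p β) = 1) → ν ∉ repCodeP p C := by
    rintro ν ⟨β, hβ, hd⟩ ⟨γ, hγ, rfl⟩
    rw [dist_blocks] at hd
    have hconst : ∀ j : Fin p, hammingDist (fun i => repv p γ (j, i)) (fun i => repv p β (j, i))
        = hammingDist γ β := fun j => rfl
    rw [Finset.sum_congr rfl fun j _ => hconst j, Finset.sum_const, Finset.card_univ,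
      Fintype.card_fin, smul_eq_mul] at hd
    have h1 : hammingDist γ β = 1 := Nat.eq_one_of_mul_eq_one_left hd
    have hne : γ ≠ β := by
      intro h
      rw [h, hammingDist_self] at h1
      omega
    have := hdelta γ hγ β hβ hne
    omega
  have hcell : cell (repCodeP p C) 1 = {ν | ∃ β ∈ C, hammingDist ν (repv p β) = 1} := by
    ext ν
    simp only [cell, Set.mem_setOf_eq]
    rw [distC_eq_one_iff hDne]
    constructor
    · rintro ⟨⟨β', ⟨β, hβ, rfl⟩, hd⟩, -⟩
      exact ⟨β, hβ, hd⟩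
    · rintro ⟨β, hβ, hd⟩
      exact ⟨⟨repv p β, ⟨β, hβ, rfl⟩, hd⟩, hnotD ν ⟨β, hβ, hd⟩⟩
  have hm0 : 0 < m := by omega
  set i₀ : Fin m := ⟨0, hm0⟩ with hi₀
  set j₀ : Fin p := ⟨0, hp⟩ with hj₀
  obtain ⟨b, hb⟩ : ∃ b : Fin q, b ≠ α i₀ :=
    Fintype.exists_ne_of_one_lt_card (by rw [Fintype.card_fin]; omega) (α i₀)
  set μ : Fin m → Fin q := Function.update α i₀ b with hμ
  set ν₀ : Fin p × Fin m → Fin q := Function.update (repv p α) (j₀, i₀) b with hν₀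
  have hμdist : hammingDist μ α = 1 := dist_update α i₀ b hb
  have hν₀dist : hammingDist ν₀ (repv p α) = 1 := dist_update (repv p α) (j₀, i₀) b hb
  have hblock : ∀ j : Fin p, (fun i => ν₀ (j, i)) = if j = j₀ then μ else α := by
    intro j
    funext i
    by_cases hj : j = j₀
    · subst hj
      rw [if_pos rfl]
      by_cases hi : i = i₀
      · subst hi; simp [hν₀, hμ]
      · simp [hν₀, hμ, Function.update_apply, hi, Prod.ext_iff, repv]
    · rw [if_neg hj]
      simp [hν₀, Function.update_apply, Prod.ext_iff, hj, repv]
  refine ⟨?_, ?_, ?_⟩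
  · -- Y ≤ autH
    rintro y ⟨⟨x, σ⟩, ⟨hxX, -⟩, rfl⟩ a b
    rw [repHom_dist σ (hisom x hxX)]
  · -- repCodeP is an orbit
    refine ⟨repv p α, ?_⟩
    ext w
    constructor
    · rintro ⟨β, hβ, rfl⟩
      rw [hCα] at hβ
      obtain ⟨x, hx, rfl⟩ := hβ
      exact ⟨repHom p (Fin m) q (x, 1), ⟨(x, 1), ⟨hx, trivial⟩, rfl⟩, repHom_repv x 1 α⟩
    · rintro ⟨y, ⟨⟨x, σ⟩, ⟨hxX, -⟩, rfl⟩, rfl⟩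
      exact ⟨x α, hCclosed α hα x hxX, (repHom_repv x σ α).symm⟩
  · -- cell 1 is an orbit
    refine ⟨ν₀, ?_⟩
    rw [hcell]
    ext ν
    constructor
    · rintro ⟨β, hβ, hd⟩
      obtain ⟨k, hkne, hkupd⟩ := eq_update_of_dist_one hd
      obtain ⟨j₁, i₁⟩ := k
      have hkne' : ν (j₁, i₁) ≠ β i₁ := hkne
      have hν'dist : hammingDist (Function.update β i₁ (ν (j₁, i₁))) β = 1 :=
        dist_update β i₁ (ν (j₁, i₁)) hkne'
      have hβorb : β ∈ {w | ∃ x ∈ X, x α = w} := by rw [← hCα]; exact hβ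
      obtain ⟨x₁, hx₁X, hx₁α⟩ := hβorb
      have hν''dist : hammingDist (x₁⁻¹ (Function.update β i₁ (ν (j₁, i₁)))) α = 1 := by
        have h := hisom x₁ hx₁X (x₁⁻¹ (Function.update β i₁ (ν (j₁, i₁)))) α
        rw [Equiv.Perm.coe_inv, Equiv.apply_symm_apply, hx₁α] at h
        rw [Equiv.Perm.coe_inv, ← h, hν'dist]
      obtain ⟨x₂, hx₂X, hx₂α, hx₂μ⟩ := hstab μ (x₁⁻¹ (Function.update β i₁ (ν (j₁, i₁))))
        hμdist hν''dist
      refine ⟨repHom p (Fin m) q (x₁ * x₂, Equiv.swap j₀ j₁),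
        ⟨(x₁ * x₂, Equiv.swap j₀ j₁), ⟨mul_mem hx₁X hx₂X, trivial⟩, rfl⟩, ?_⟩
      have hxμ : (x₁ * x₂) μ = Function.update β i₁ (ν (j₁, i₁)) := by
        rw [Equiv.Perm.mul_apply, hx₂μ, Equiv.Perm.coe_inv, Equiv.apply_symm_apply]
      have hxα : (x₁ * x₂) α = β := by
        rw [Equiv.Perm.mul_apply, hx₂α, hx₁α]
      funext ji
      obtain ⟨j, i⟩ := ji
      rw [repHom_apply, Equiv.swap_inv, hblock]
      by_cases hj : j = j₁
      · subst hj
        rw [Equiv.swap_apply_right, if_pos rfl, hxμ]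
        conv_rhs => rw [hkupd]
        by_cases hi : i = i₁
        · subst hi; simp
        · simp [Function.update_apply, hi, Prod.ext_iff, repv]
      · have hσj : Equiv.swap j₀ j₁ j ≠ j₀ := by
          intro hc
          have := congrArg (Equiv.swap j₀ j₁) hc
          rw [Equiv.swap_apply_self, Equiv.swap_apply_left] at this
          exact hj this
        rw [if_neg hσj, hxα]
        conv_rhs => rw [hkupd]
        rw [Function.update_apply, if_neg (by simp [Prod.ext_iff, hj])]
        rfl
    · rintro ⟨y, ⟨⟨x, σ⟩, ⟨hxX, -⟩, rfl⟩, rfl⟩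
      refine ⟨x α, hCclosed α hα x hxX, ?_⟩
      rw [← repHom_repv x σ α, repHom_dist σ (hisom x hxX), hν₀dist]
end

section
/- Let q = 2 and let m ≥ 3 be odd. The code W([m/2],2) in H(m,2), consisting of all binary m-tuples of weight (m+1)/2 or (m−1)/2, is neighbour transitive, has automorphism group Aut(W([m/2],2)) = Diag_m(S_2) ⋊ L, and has minimum distance δ = 1. -/
open Equiv Pointwise

section AuxProofs
open Finset

variable {m : ℕ}

lemma fin2_cases (x : Fin 2) : x = 0 ∨ x = 1 := by omega

lemma perm_apply_inv_self' {α : Type*} (σ : Equiv.Perm α) (x : α) : σ (σ⁻¹ x) = x :=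
  σ.apply_symm_apply x

lemma perm_inv_apply_self' {α : Type*} (σ : Equiv.Perm α) (x : α) : σ⁻¹ (σ x) = x :=
  σ.symm_apply_apply x

lemma perm_fin2 : ∀ g : Equiv.Perm (Fin 2), g = 1 ∨ g = Equiv.swap 0 1 := by decide

lemma tvp_apply' {I : Type*} [Fintype I] [DecidableEq I] {q : ℕ}
    (g : I → Equiv.Perm (Fin q)) (σ : Equiv.Perm I) (α : I → Fin q) (i : I) :
    tvp g σ α i = g (σ⁻¹ i) (α (σ⁻¹ i)) := rfl

lemma hd_def {I : Type*} [Fintype I] [DecidableEq I] {q : ℕ} (α β : I → Fin q) :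
    hammingDist α β = (univ.filter fun i => α i ≠ β i).card := rfl

lemma card_filter_perm {I : Type*} [Fintype I] [DecidableEq I] (σ : Equiv.Perm I)
    (p : I → Prop) [DecidablePred p] :
    (univ.filter fun i => p (σ⁻¹ i)).card = (univ.filter p).card := by
  apply Finset.card_bij (fun i _ => σ⁻¹ i)
  · intro a ha; simp only [mem_filter, mem_univ, true_and] at ha ⊢; exact ha
  · intro a _ b _ h; exact (Equiv.injective σ⁻¹) h
  · intro b hb
    refine ⟨σ b, ?_, by simp⟩
    simp only [mem_filter, mem_univ, true_and] at hb ⊢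
    simpa using hb

lemma hd_tvp {I : Type*} [Fintype I] [DecidableEq I] {q : ℕ}
    (g : I → Equiv.Perm (Fin q)) (σ : Equiv.Perm I) (α β : I → Fin q) :
    hammingDist (tvp g σ α) (tvp g σ β) = hammingDist α β := by
  rw [hd_def, hd_def]
  have h1 : (univ.filter fun i => tvp g σ α i ≠ tvp g σ β i)
      = univ.filter fun i => α (σ⁻¹ i) ≠ β (σ⁻¹ i) := by
    apply Finset.filter_congr
    intro i _
    simp [tvp_apply', (g (σ⁻¹ i)).injective.ne_iff]
  rw [h1]
  exact card_filter_perm σ (fun i => α i ≠ β i)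

lemma tvp_mem_autH {I : Type*} [Fintype I] [DecidableEq I] {q : ℕ}
    (g : I → Equiv.Perm (Fin q)) (σ : Equiv.Perm I) : tvp g σ ∈ autH I q := by
  intro α β
  rw [hd_tvp]

lemma diagL_le_autH' {I : Type*} [Fintype I] [DecidableEq I] {q : ℕ} :
    diagL I q ≤ autH I q := by
  intro y hy
  obtain ⟨p, rfl⟩ := hy
  exact tvp_mem_autH (fun _ => p.1) p.2

lemma autH_hd_le {I : Type*} [Fintype I] [DecidableEq I] {q : ℕ}
    {y : Equiv.Perm (I → Fin q)} (hy : y ∈ autH I q) :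
    ∀ n (α β : I → Fin q), hammingDist α β = n → hammingDist (y α) (y β) ≤ n := by
  intro n
  induction n using Nat.strong_induction_on with
  | _ n ih =>
    match n with
    | 0 =>
      intro α β h
      rw [hammingDist_eq_zero] at h
      subst h
      simp
    | 1 =>
      intro α β h
      exact le_of_eq ((hy α β).mpr h)
    | (k+2) =>
      intro α β h
      have hne : ∃ i, α i ≠ β i := by
        by_contra hc
        push_neg at hc
        have : α = β := funext hc
        subst this
        simp [hammingDist_self] at h
      obtain ⟨i, hi⟩ := hne
      set γ := Function.update α i (β i) with hγ
      have h1 : hammingDist α γ = 1 := by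
        rw [hd_def]
        rw [Finset.card_eq_one]
        refine ⟨i, ?_⟩
        ext j
        simp only [mem_filter, mem_univ, true_and, mem_singleton]
        by_cases hj : j = i
        · subst hj; simp [hγ, Function.update_self, hi]
        · simp [hγ, Function.update_of_ne hj, hj]
      have h2 : hammingDist γ β = k + 1 := by
        rw [hd_def] at h ⊢
        have : (univ.filter fun j => γ j ≠ β j)
            = (univ.filter fun j => α j ≠ β j).erase i := by
          ext j
          simp only [mem_filter, mem_univ, true_and, mem_erase]
          by_cases hj : j = i
          · subst hj; simp [hγ, Function.update_self]
          · simp [hγ, Function.update_of_ne hj, hj]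
        rw [this, Finset.card_erase_of_mem (by simp [hi]), h]
        omega
      calc hammingDist (y α) (y β)
          ≤ hammingDist (y α) (y γ) + hammingDist (y γ) (y β) :=
            hammingDist_triangle _ _ _
        _ ≤ 1 + (k+1) := by
            have e1 : hammingDist (y α) (y γ) = 1 := (hy α γ).mpr h1
            have e2 : hammingDist (y γ) (y β) ≤ k + 1 :=
              ih (k+1) (by omega) γ β h2
            omega
        _ = k + 2 := by omega

lemma autH_hd {I : Type*} [Fintype I] [DecidableEq I] {q : ℕ}
    {y : Equiv.Perm (I → Fin q)} (hy : y ∈ autH I q) (α β : I → Fin q) :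
    hammingDist (y α) (y β) = hammingDist α β := by
  have h1 := autH_hd_le hy (hammingDist α β) α β rfl
  have h2 := autH_hd_le ((autH I q).inv_mem hy) (hammingDist (y α) (y β)) (y α) (y β) rfl
  simp only [Equiv.Perm.inv_def, Equiv.symm_apply_apply] at h2
  omega

/-! ### weights -/

lemma wt_def (α : Fin m → Fin 2) : wt α = (univ.filter fun i => α i ≠ 0).card := rfl

lemma wt_eq_hd_zero (α : Fin m → Fin 2) : wt α = hammingDist α (fun _ => 0) := rfl

lemma wt_le (α : Fin m → Fin 2) : wt α ≤ m := by
  rw [wt_def]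
  calc (univ.filter fun i => α i ≠ 0).card ≤ (univ : Finset (Fin m)).card :=
        Finset.card_filter_le _ _
    _ = m := by simp

lemma card_filter_split_s8 (p : Fin m → Prop) [DecidablePred p] (i : Fin m) :
    (univ.filter p).card = (((univ : Finset (Fin m)).erase i).filter p).card
      + (if p i then 1 else 0) := by
  have h1 : (univ.filter p) = (insert i ((univ : Finset (Fin m)).erase i)).filter p := by
    rw [Finset.insert_erase (Finset.mem_univ i)]
  rw [h1, Finset.filter_insert]
  by_cases h : p i
  · rw [if_pos h, if_pos h, Finset.card_insert_of_notMem (by simp)]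
  · rw [if_neg h, if_neg h, add_zero]

lemma wt_tvp (g : Fin m → Equiv.Perm (Fin 2)) (σ : Equiv.Perm (Fin m))
    (α : Fin m → Fin 2) :
    wt (tvp g σ α) = (univ.filter fun i => g i (α i) ≠ 0).card := by
  rw [wt_def]
  have h1 : (univ.filter fun i => tvp g σ α i ≠ 0)
      = univ.filter fun i => g (σ⁻¹ i) (α (σ⁻¹ i)) ≠ 0 := rfl
  rw [h1]
  exact card_filter_perm σ (fun i => g i (α i) ≠ 0)

lemma wt_tvp_one (σ : Equiv.Perm (Fin m)) (α : Fin m → Fin 2) :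
    wt (tvp (fun _ => (1 : Equiv.Perm (Fin 2))) σ α) = wt α := by
  rw [wt_tvp, wt_def]
  rfl

lemma swap01_apply (x : Fin 2) : Equiv.swap (0 : Fin 2) 1 x = if x = 0 then 1 else 0 := by
  rcases fin2_cases x with h | h <;> subst h <;> decide

lemma wt_tvp_swap (σ : Equiv.Perm (Fin m)) (α : Fin m → Fin 2) :
    wt (tvp (fun _ => Equiv.swap (0:Fin 2) 1) σ α) = m - wt α := by
  rw [wt_tvp]
  have h1 : (univ.filter fun i => Equiv.swap (0:Fin 2) 1 (α i) ≠ 0)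
      = univ.filter fun i => ¬ (α i ≠ 0) := by
    apply Finset.filter_congr
    intro i _
    rcases fin2_cases (α i) with h | h <;> rw [h] <;> decide
  rw [h1]
  have h2 := Finset.card_filter_add_card_filter_not
    (s := (univ : Finset (Fin m))) (p := fun i => α i ≠ 0)
  rw [wt_def]
  simp only [Finset.card_univ, Fintype.card_fin] at h2
  omega

/-! ### weight one vertices and the classification of autH for q = 2 -/

/-- weight-one vertex -/
def eVtx (i : Fin m) : Fin m → Fin 2 := fun j => if j = i then 1 else 0

lemma wt_eVtx (i : Fin m) : wt (eVtx i) = 1 := by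
  rw [wt_def, Finset.card_eq_one]
  refine ⟨i, ?_⟩
  ext j
  simp only [mem_filter, mem_univ, true_and, mem_singleton, eVtx]
  by_cases hj : j = i <;> simp [hj]

lemma wt_eq_one_iff (β : Fin m → Fin 2) : wt β = 1 ↔ ∃ i, β = eVtx i := by
  constructor
  · intro h
    rw [wt_def, Finset.card_eq_one] at h
    obtain ⟨i, hi⟩ := h
    refine ⟨i, funext fun j => ?_⟩
    have hj := Finset.ext_iff.mp hi j
    simp only [mem_filter, mem_univ, true_and, mem_singleton] at hj
    by_cases hji : j = i
    · subst hji
      have hne : β j ≠ 0 := hj.mpr rfl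
      have hone : β j = 1 := by omega
      simp [eVtx, hone]
    · have : ¬ β j ≠ 0 := fun hc => hji (hj.mp hc)
      push_neg at this
      simp [eVtx, hji, this]
  · rintro ⟨i, rfl⟩
    exact wt_eVtx i


lemma hd_eVtx_of_zero {α : Fin m → Fin 2} {i : Fin m} (h : α i = 0) :
    hammingDist α (eVtx i) = wt α + 1 := by
  rw [hd_def, wt_def, card_filter_split_s8 (fun j => α j ≠ eVtx i j) i,
    card_filter_split_s8 (fun j => α j ≠ 0) i]
  have herase : (((univ : Finset (Fin m)).erase i).filter fun j => α j ≠ eVtx i j)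
      = ((univ : Finset (Fin m)).erase i).filter fun j => α j ≠ 0 := by
    apply Finset.filter_congr
    intro j hj
    have hne : j ≠ i := (Finset.mem_erase.mp hj).1
    simp [eVtx, hne]
  rw [herase]
  have h1 : (α i ≠ eVtx i i) := by simp [eVtx, h]
  rw [if_pos h1, if_neg (by simp [h])]

lemma hd_eVtx_of_ne_zero {α : Fin m → Fin 2} {i : Fin m} (h : α i ≠ 0) :
    hammingDist α (eVtx i) + 1 = wt α := by
  rw [hd_def, wt_def, card_filter_split_s8 (fun j => α j ≠ eVtx i j) i,
    card_filter_split_s8 (fun j => α j ≠ 0) i]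
  have herase : (((univ : Finset (Fin m)).erase i).filter fun j => α j ≠ eVtx i j)
      = ((univ : Finset (Fin m)).erase i).filter fun j => α j ≠ 0 := by
    apply Finset.filter_congr
    intro j hj
    have hne : j ≠ i := (Finset.mem_erase.mp hj).1
    simp [eVtx, hne]
  rw [herase]
  have h1 : α i = 1 := by omega
  have h2 : ¬ (α i ≠ eVtx i i) := by simp [eVtx, h1]
  rw [if_neg h2, if_pos h]

/-- classification of automorphisms of the binary Hamming graph -/
lemma autH_classify {y : Equiv.Perm (Fin m → Fin 2)} (hy : y ∈ autH (Fin m) 2) :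
    ∃ (g : Fin m → Equiv.Perm (Fin 2)) (σ : Equiv.Perm (Fin m)), y = tvp g σ := by
  classical
  set v : Fin m → Fin 2 := y (fun _ => 0) with hv
  set g0 : Fin m → Equiv.Perm (Fin 2) := fun i => Equiv.swap 0 (v i) with hg0
  set t : Equiv.Perm (Fin m → Fin 2) := tvp g0 1 with ht
  set z : Equiv.Perm (Fin m → Fin 2) := t⁻¹ * y with hz
  have ht_mem : t ∈ autH (Fin m) 2 := tvp_mem_autH _ _
  have hz_mem : z ∈ autH (Fin m) 2 := (autH (Fin m) 2).mul_mem ((autH (Fin m) 2).inv_mem ht_mem) hy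
  have hz_hd : ∀ α β, hammingDist (z α) (z β) = hammingDist α β := autH_hd hz_mem
  have ht0 : t (fun _ => 0) = v := by
    funext i
    show g0 (((1 : Equiv.Perm (Fin m)))⁻¹ i) 0 = v i
    simp [hg0]
  have hz0 : z (fun _ => 0) = (fun _ => 0) := by
    have : y (fun _ => 0) = t (fun _ => 0) := by rw [ht0]
    rw [hz]
    simp only [Equiv.Perm.mul_apply]
    rw [this, perm_inv_apply_self']
  have hzwt : ∀ α, wt (z α) = wt α := by
    intro α
    calc wt (z α) = hammingDist (z α) (z (fun _ => 0)) := by rw [hz0]; rfl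
      _ = hammingDist α (fun _ => 0) := hz_hd _ _
      _ = wt α := (wt_eq_hd_zero α).symm
  -- permutation on coordinates
  have hf : ∀ i, ∃ j, z (eVtx i) = eVtx j := by
    intro i
    have : wt (z (eVtx i)) = 1 := by rw [hzwt, wt_eVtx]
    exact (wt_eq_one_iff _).mp this
  choose f hfspec using hf
  have finj : Function.Injective f := by
    intro a b hab
    have : z (eVtx a) = z (eVtx b) := by
      rw [hfspec, hfspec, hab]
    have he : eVtx a = eVtx b := z.injective this
    by_contra hne
    have h2 := congrFun he a
    simp only [eVtx, if_pos rfl] at h2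
    rw [if_neg hne] at h2
    exact absurd h2 (by decide)
  let σ : Equiv.Perm (Fin m) := Equiv.ofBijective f (Finite.injective_iff_bijective.mp finj)
  have hσ : ∀ i, σ i = f i := fun i => rfl
  -- key pointwise property
  have key : ∀ (α : Fin m → Fin 2) (i : Fin m), z α (σ i) = α i := by
    intro α i
    have hdist : hammingDist (z α) (eVtx (σ i)) = hammingDist α (eVtx i) := by
      rw [hσ, ← hfspec, hz_hd]
    rcases fin2_cases (α i) with h | h
    · -- α i = 0 : want z α (σ i) = 0
      have h1 : hammingDist α (eVtx i) = wt α + 1 := hd_eVtx_of_zero h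
      by_contra hc
      rw [h] at hc
      have h2 : hammingDist (z α) (eVtx (σ i)) + 1 = wt (z α) := hd_eVtx_of_ne_zero hc
      rw [hzwt] at h2
      omega
    · -- α i = 1
      have h1 : hammingDist α (eVtx i) + 1 = wt α := hd_eVtx_of_ne_zero (by omega)
      rcases fin2_cases (z α (σ i)) with hc | hc
      · have h2 : hammingDist (z α) (eVtx (σ i)) = wt (z α) + 1 := hd_eVtx_of_zero hc
        rw [hzwt] at h2
        omega
      · rw [hc, h]
  have hzeq : z = tvp (fun _ => (1 : Equiv.Perm (Fin 2))) σ := by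
    apply Equiv.ext
    intro α
    funext j
    have := key α (σ⁻¹ j)
    rw [perm_apply_inv_self'] at this
    rw [this]
    rfl
  refine ⟨fun i => g0 (σ i), σ, ?_⟩
  apply Equiv.ext
  intro α
  funext j
  have hy_eq : y = t * z := by rw [hz]; group
  rw [hy_eq]
  show t (z α) j = _
  rw [hzeq]
  show g0 ((1 : Equiv.Perm (Fin m))⁻¹ j) ((tvp (fun _ => (1 : Equiv.Perm (Fin 2))) σ α) ((1 : Equiv.Perm (Fin m))⁻¹ j)) = _
  show g0 j ((1 : Equiv.Perm (Fin 2)) (α (σ⁻¹ j))) = tvp _ σ α j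
  show g0 j (α (σ⁻¹ j)) = g0 (σ (σ⁻¹ j)) (α (σ⁻¹ j))
  rw [perm_apply_inv_self']

end AuxProofs

section Aux2
open Finset Pointwise

variable {m : ℕ}

lemma mem_wCode_iff (α : Fin m → Fin 2) :
    α ∈ wCode m ↔ wt α = (m+1)/2 ∨ wt α = (m-1)/2 := Iff.rfl

lemma card_filter_split'' (u : Finset (Fin m)) (p : Fin m → Prop) [DecidablePred p]
    {i : Fin m} (hi : i ∈ u) :
    (u.filter p).card = ((u.erase i).filter p).card + (if p i then 1 else 0) := by
  have h1 : (u.filter p) = (insert i (u.erase i)).filter p := by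
    rw [Finset.insert_erase hi]
  rw [h1, Finset.filter_insert]
  by_cases h : p i
  · rw [if_pos h, if_pos h, Finset.card_insert_of_notMem (by simp)]
  · rw [if_neg h, if_neg h, add_zero]

lemma wt_indicator (s : Finset (Fin m)) :
    wt (fun l => if l ∈ s then (1 : Fin 2) else 0) = s.card := by
  rw [wt_def]
  congr 1
  ext l
  by_cases h : l ∈ s <;> simp [h]

lemma diagL_wt {x : Equiv.Perm (Fin m → Fin 2)} (hx : x ∈ diagL (Fin m) 2)
    (α : Fin m → Fin 2) : wt (x α) = wt α ∨ wt (x α) = m - wt α := by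
  obtain ⟨p, rfl⟩ := hx
  have hp : diagLHom (Fin m) 2 p = tvp (fun _ => p.1) p.2 := rfl
  rcases perm_fin2 p.1 with h1 | h1
  · left; rw [hp, h1]; exact wt_tvp_one p.2 α
  · right; rw [hp, h1]; exact wt_tvp_swap p.2 α

lemma diagL_mem_wCode {r : ℕ} (hm : m = 2*r+1) {x : Equiv.Perm (Fin m → Fin 2)}
    (hx : x ∈ diagL (Fin m) 2) {α : Fin m → Fin 2} (hα : α ∈ wCode m) :
    x α ∈ wCode m := by
  have h1 := diagL_wt hx α
  rw [mem_wCode_iff] at hα ⊢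
  omega

lemma diagL_smul_wCode {r : ℕ} (hm : m = 2*r+1) {x : Equiv.Perm (Fin m → Fin 2)}
    (hx : x ∈ diagL (Fin m) 2) : x • wCode m = wCode m := by
  apply Set.Subset.antisymm
  · intro β hβ
    obtain ⟨α, hα, rfl⟩ := Set.mem_smul_set.mp hβ
    rw [Equiv.Perm.smul_def]
    exact diagL_mem_wCode hm hx hα
  · intro β hβ
    refine Set.mem_smul_set.mpr ⟨x⁻¹ β, diagL_mem_wCode hm ((diagL (Fin m) 2).inv_mem hx) hβ, ?_⟩
    rw [Equiv.Perm.smul_def, perm_apply_inv_self']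

lemma stab_to_diagL {r : ℕ} (hm : m = 2*r+1) (hr : 1 ≤ r)
    {y : Equiv.Perm (Fin m → Fin 2)} (hy : y ∈ autH (Fin m) 2)
    (hst : ∀ α ∈ wCode m, y α ∈ wCode m) : y ∈ diagL (Fin m) 2 := by
  obtain ⟨g, σ, rfl⟩ := autH_classify hy
  have hconst : ∀ i j, g i = g j := by
    by_contra hc
    push_neg at hc
    obtain ⟨i, j, hij⟩ := hc
    have hex : ∃ a b : Fin m, a ≠ b ∧ g a 0 = 0 ∧ g b 0 ≠ 0 := by
      have hne : i ≠ j := fun h => hij (by rw [h])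
      rcases perm_fin2 (g i) with h1 | h1 <;> rcases perm_fin2 (g j) with h2 | h2
      · exact absurd (h1.trans h2.symm) hij
      · exact ⟨i, j, hne, by rw [h1]; rfl, by rw [h2]; decide⟩
      · exact ⟨j, i, hne.symm, by rw [h2]; rfl, by rw [h1]; decide⟩
      · exact absurd (h1.trans h2.symm) hij
    obtain ⟨a, b, hab, hga, hgb⟩ := hex
    have hcard2 : ((univ : Finset (Fin m)) \ {a, b}).card = m - 2 := by
      rw [Finset.card_sdiff_of_subset (Finset.subset_univ _), Finset.card_pair hab,
        Finset.card_univ, Fintype.card_fin]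
    obtain ⟨s, hs_sub, hs_card⟩ :=
      Finset.exists_subset_card_eq (s := (univ : Finset (Fin m)) \ {a, b}) (n := r) (by omega)
    have ha_s : a ∉ s := by
      intro hcc
      have := Finset.mem_sdiff.mp (hs_sub hcc)
      simp at this
    have hb_s : b ∉ s := by
      intro hcc
      have := Finset.mem_sdiff.mp (hs_sub hcc)
      simp at this
    set α : Fin m → Fin 2 := fun l => if l ∈ insert b s then 1 else 0 with hαdef
    set α' : Fin m → Fin 2 := fun l => if l ∈ insert a s then 1 else 0 with hα'def
    have hwα : wt α = r + 1 := by
      rw [hαdef, wt_indicator, Finset.card_insert_of_notMem hb_s, hs_card]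
    have hwα' : wt α' = r + 1 := by
      rw [hα'def, wt_indicator, Finset.card_insert_of_notMem ha_s, hs_card]
    have hαa : α a = 0 := by
      have hnot : a ∉ insert b s := by
        rw [Finset.mem_insert]
        push_neg
        exact ⟨hab, ha_s⟩
      show (if a ∈ insert b s then (1:Fin 2) else 0) = 0
      rw [if_neg hnot]
    have hαb : α b = 1 := by
      show (if b ∈ insert b s then (1:Fin 2) else 0) = 1
      rw [if_pos (Finset.mem_insert_self b s)]
    have hα'a : α' a = 1 := by
      show (if a ∈ insert a s then (1:Fin 2) else 0) = 1
      rw [if_pos (Finset.mem_insert_self a s)]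
    have hα'b : α' b = 0 := by
      have hnot : b ∉ insert a s := by
        rw [Finset.mem_insert]
        push_neg
        exact ⟨hab.symm, hb_s⟩
      show (if b ∈ insert a s then (1:Fin 2) else 0) = 0
      rw [if_neg hnot]
    have hb_mem : b ∈ (univ : Finset (Fin m)).erase a :=
      Finset.mem_erase.mpr ⟨hab.symm, Finset.mem_univ b⟩
    -- g-values
    have hga1 : g a 1 ≠ 0 := by
      intro hcc
      exact absurd ((g a).injective (hcc.trans hga.symm)) (by decide)
    have hgb0 : g b 0 = 1 := by omega
    have hgb1 : g b 1 = 0 := by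
      have hne : g b 1 ≠ g b 0 := fun hcc => absurd ((g b).injective hcc) (by decide)
      rw [hgb0] at hne
      omega
    have hA : wt (tvp g σ α) =
        ((((univ : Finset (Fin m)).erase a).erase b).filter fun l => g l (α l) ≠ 0).card
        + (if g b (α b) ≠ 0 then 1 else 0) + (if g a (α a) ≠ 0 then 1 else 0) := by
      rw [wt_tvp, card_filter_split'' univ _ (Finset.mem_univ a),
        card_filter_split'' ((univ : Finset (Fin m)).erase a) _ hb_mem]
    have hA' : wt (tvp g σ α') =
        ((((univ : Finset (Fin m)).erase a).erase b).filter fun l => g l (α' l) ≠ 0).card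
        + (if g b (α' b) ≠ 0 then 1 else 0) + (if g a (α' a) ≠ 0 then 1 else 0) := by
      rw [wt_tvp, card_filter_split'' univ _ (Finset.mem_univ a),
        card_filter_split'' ((univ : Finset (Fin m)).erase a) _ hb_mem]
    have herase : ((((univ : Finset (Fin m)).erase a).erase b).filter fun l => g l (α' l) ≠ 0)
        = (((univ : Finset (Fin m)).erase a).erase b).filter fun l => g l (α l) ≠ 0 := by
      apply Finset.filter_congr
      intro l hl
      have hlb : l ≠ b := (Finset.mem_erase.mp hl).1
      have hla : l ≠ a := (Finset.mem_erase.mp (Finset.mem_erase.mp hl).2).1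
      have : α' l = α l := by
        show (if l ∈ insert a s then (1:Fin 2) else 0) = (if l ∈ insert b s then (1:Fin 2) else 0)
        by_cases hls : l ∈ s
        · rw [if_pos (Finset.mem_insert_of_mem hls), if_pos (Finset.mem_insert_of_mem hls)]
        · rw [if_neg (by rw [Finset.mem_insert]; push_neg; exact ⟨hla, hls⟩),
            if_neg (by rw [Finset.mem_insert]; push_neg; exact ⟨hlb, hls⟩)]
      rw [this]
    rw [hαa, hαb, hga, hgb1] at hA
    rw [hα'a, hα'b] at hA'
    rw [herase] at hA'
    rw [if_pos hgb, if_pos hga1] at hA'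
    have hm1 : tvp g σ α ∈ wCode m := hst α ((mem_wCode_iff α).mpr (by omega))
    have hm2 : tvp g σ α' ∈ wCode m := hst α' ((mem_wCode_iff α').mpr (by omega))
    rw [mem_wCode_iff] at hm1 hm2
    split_ifs at hA <;> omega
  have h0m : 0 < m := by omega
  refine ⟨(g ⟨0, h0m⟩, σ), ?_⟩
  have : (fun _ : Fin m => g ⟨0, h0m⟩) = g := funext fun i => hconst ⟨0, h0m⟩ i
  show tvp (fun _ => g ⟨0, h0m⟩) σ = tvp g σ
  rw [this]

lemma exists_perm_sets (s t : Finset (Fin m)) (h : s.card = t.card) :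
    ∃ σ : Equiv.Perm (Fin m), ∀ i, σ⁻¹ i ∈ s ↔ i ∈ t := by
  classical
  have hcompl : ((univ : Finset (Fin m)) \ s).card = ((univ : Finset (Fin m)) \ t).card := by
    rw [Finset.card_sdiff_of_subset (Finset.subset_univ s), Finset.card_sdiff_of_subset (Finset.subset_univ t), h]
  let e1 : {x // x ∈ s} ≃ {x // x ∈ t} := Finset.equivOfCardEq h
  let e2' : {x // x ∈ (univ : Finset (Fin m)) \ s} ≃ {x // x ∈ (univ : Finset (Fin m)) \ t} :=
    Finset.equivOfCardEq hcompl
  let e2 : {x : Fin m // ¬ x ∈ s} ≃ {x : Fin m // ¬ x ∈ t} :=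
    ((Equiv.subtypeEquivRight (fun x => by simp)).trans e2').trans
      (Equiv.subtypeEquivRight (fun x => by simp))
  let σ : Equiv.Perm (Fin m) :=
    ((Equiv.sumCompl (· ∈ s)).symm.trans ((e1.sumCongr e2).trans (Equiv.sumCompl (· ∈ t))))
  have hmain : ∀ x, σ x ∈ t ↔ x ∈ s := by
    intro x
    by_cases hx : x ∈ s
    · have h1 : (Equiv.sumCompl (· ∈ s)).symm x = Sum.inl ⟨x, hx⟩ :=
        Equiv.sumCompl_symm_apply_of_pos hx
      have h2 : σ x = ((e1 ⟨x, hx⟩ : {x // x ∈ t}) : Fin m) := by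
        show (Equiv.sumCompl (· ∈ t)) ((e1.sumCongr e2) ((Equiv.sumCompl (· ∈ s)).symm x)) = _
        rw [h1]
        rfl
      rw [h2]
      exact iff_of_true (e1 ⟨x, hx⟩).2 hx
    · have h1 : (Equiv.sumCompl (· ∈ s)).symm x = Sum.inr ⟨x, hx⟩ :=
        Equiv.sumCompl_symm_apply_of_neg hx
      have h2 : σ x = ((e2 ⟨x, hx⟩ : {x : Fin m // ¬ x ∈ t}) : Fin m) := by
        show (Equiv.sumCompl (· ∈ t)) ((e1.sumCongr e2) ((Equiv.sumCompl (· ∈ s)).symm x)) = _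
        rw [h1]
        rfl
      rw [h2]
      exact iff_of_false (e2 ⟨x, hx⟩).2 hx
  refine ⟨σ, fun i => ?_⟩
  have := hmain (σ⁻¹ i)
  rw [perm_apply_inv_self'] at this
  exact this.symm


end Aux2

section Aux2b
open Finset
variable {m : ℕ}

lemma orbit_weights {w : ℕ} (hw : w ≤ m) :
    IsOrbitOf (diagL (Fin m) 2) {α : Fin m → Fin 2 | wt α = w ∨ wt α = m - w} := by
  obtain ⟨s, -, hs_card⟩ := Finset.exists_subset_card_eq (s := (univ : Finset (Fin m))) (n := w)
    (by simp only [Finset.card_univ, Fintype.card_fin]; omega)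
  refine ⟨fun i => if i ∈ s then 1 else 0, ?_⟩
  ext α
  simp only [Set.mem_setOf_eq]
  constructor
  · rintro (hα | hα)
    · set tset := univ.filter (fun i => α i ≠ 0) with htset
      have hcard : s.card = tset.card := by
        rw [hs_card, htset, ← wt_def, hα]
      obtain ⟨σ, hσ⟩ := exists_perm_sets s tset hcard
      refine ⟨diagLHom (Fin m) 2 (1, σ), ⟨(1, σ), rfl⟩, ?_⟩
      funext i
      have hx : diagLHom (Fin m) 2 (1, σ) (fun j => if j ∈ s then (1:Fin 2) else 0) i
          = (if σ⁻¹ i ∈ s then (1:Fin 2) else 0) := rfl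
      rw [hx]
      by_cases hi : i ∈ tset
      · rw [if_pos ((hσ i).mpr hi)]
        have h2 : α i ≠ 0 := (Finset.mem_filter.mp hi).2
        omega
      · rw [if_neg (fun hcc => hi ((hσ i).mp hcc))]
        have h2 : ¬ α i ≠ 0 := fun hcc => hi (Finset.mem_filter.mpr ⟨Finset.mem_univ i, hcc⟩)
        omega
    · set zset := univ.filter (fun i => ¬ α i ≠ 0) with hzset
      have hcard : s.card = zset.card := by
        have hz2 : zset = univ \ univ.filter (fun i => α i ≠ 0) := Finset.filter_not _ _
        rw [hs_card, hz2, Finset.card_sdiff_of_subset (Finset.filter_subset _ _), ← wt_def, hα,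
          Finset.card_univ, Fintype.card_fin]
        omega
      obtain ⟨σ, hσ⟩ := exists_perm_sets s zset hcard
      refine ⟨diagLHom (Fin m) 2 (Equiv.swap 0 1, σ), ⟨(Equiv.swap 0 1, σ), rfl⟩, ?_⟩
      funext i
      have hx : diagLHom (Fin m) 2 (Equiv.swap 0 1, σ) (fun j => if j ∈ s then (1:Fin 2) else 0) i
          = Equiv.swap (0:Fin 2) 1 (if σ⁻¹ i ∈ s then (1:Fin 2) else 0) := rfl
      rw [hx]
      by_cases hi : i ∈ zset
      · rw [if_pos ((hσ i).mpr hi)]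
        have h2 : ¬ α i ≠ 0 := (Finset.mem_filter.mp hi).2
        rw [swap01_apply]
        simp only [if_neg (by decide : ¬ (1:Fin 2) = 0)]
        omega
      · rw [if_neg (fun hcc => hi ((hσ i).mp hcc))]
        have h2 : α i ≠ 0 := by
          by_contra hcc
          exact hi (Finset.mem_filter.mpr ⟨Finset.mem_univ i, fun h => h hcc⟩)
        rw [swap01_apply]
        norm_num
        all_goals omega
  · rintro ⟨x, hx, rfl⟩
    have h1 := diagL_wt hx (fun i => if i ∈ s then (1:Fin 2) else 0)
    rw [wt_indicator, hs_card] at h1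
    exact h1

/-! ### flips -/

lemma hd_update (α : Fin m → Fin 2) (i : Fin m) (c : Fin 2) (hc : α i ≠ c) :
    hammingDist α (Function.update α i c) = 1 := by
  rw [hd_def, Finset.card_eq_one]
  refine ⟨i, ?_⟩
  ext j
  simp only [Finset.mem_filter, Finset.mem_univ, true_and, Finset.mem_singleton]
  by_cases hj : j = i
  · subst hj; simp [Function.update_self, hc]
  · simp [Function.update_of_ne hj, hj]

lemma exists_flip_down {α : Fin m → Fin 2} (h : 0 < wt α) :
    ∃ β, hammingDist α β = 1 ∧ wt α = wt β + 1 := by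
  have hex : ∃ i, α i ≠ 0 := by
    by_contra hc
    push_neg at hc
    have : wt α = 0 := by
      rw [wt_def, Finset.card_eq_zero, Finset.filter_eq_empty_iff]
      intro j _
      simp [hc j]
    omega
  obtain ⟨i, hi⟩ := hex
  refine ⟨Function.update α i 0, hd_update α i 0 hi, ?_⟩
  have h1 := card_filter_split'' (univ : Finset (Fin m)) (fun j => α j ≠ 0) (Finset.mem_univ i)
  have h2 := card_filter_split'' (univ : Finset (Fin m))
    (fun j => Function.update α i 0 j ≠ 0) (Finset.mem_univ i)
  have herase : (((univ : Finset (Fin m)).erase i).filter fun j => Function.update α i 0 j ≠ 0)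
      = ((univ : Finset (Fin m)).erase i).filter fun j => α j ≠ 0 := by
    apply Finset.filter_congr
    intro j hj
    rw [Function.update_of_ne (Finset.mem_erase.mp hj).1]
  rw [herase] at h2
  have hwα : wt α = _ := h1
  have hwβ : wt (Function.update α i 0) = _ := h2
  have hupd : Function.update α i 0 i = 0 := Function.update_self i 0 α
  split_ifs at hwα hwβ <;> omega

lemma exists_flip_up {α : Fin m → Fin 2} (h : wt α < m) :
    ∃ β, hammingDist α β = 1 ∧ wt β = wt α + 1 := by
  have hex : ∃ i, α i = 0 := by
    by_contra hc
    push_neg at hc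
    have : wt α = m := by
      rw [wt_def]
      rw [Finset.filter_true_of_mem (fun j _ => hc j)]
      simp
    omega
  obtain ⟨i, hi⟩ := hex
  refine ⟨Function.update α i 1, hd_update α i 1 (by omega), ?_⟩
  have h1 := card_filter_split'' (univ : Finset (Fin m)) (fun j => α j ≠ 0) (Finset.mem_univ i)
  have h2 := card_filter_split'' (univ : Finset (Fin m))
    (fun j => Function.update α i 1 j ≠ 0) (Finset.mem_univ i)
  have herase : (((univ : Finset (Fin m)).erase i).filter fun j => Function.update α i 1 j ≠ 0)
      = ((univ : Finset (Fin m)).erase i).filter fun j => α j ≠ 0 := by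
    apply Finset.filter_congr
    intro j hj
    rw [Function.update_of_ne (Finset.mem_erase.mp hj).1]
  rw [herase] at h2
  have hwα : wt α = _ := h1
  have hwβ : wt (Function.update α i 1) = _ := h2
  have hupd : Function.update α i 1 i = 1 := Function.update_self i 1 α
  split_ifs at hwα hwβ <;> omega

lemma hd_one_wt {α β : Fin m → Fin 2} (h : hammingDist α β = 1) :
    wt α = wt β + 1 ∨ wt β = wt α + 1 := by
  rw [hd_def, Finset.card_eq_one] at h
  obtain ⟨i, hi⟩ := h
  have hmem : ∀ j, (α j ≠ β j) ↔ j = i := by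
    intro j
    have := Finset.ext_iff.mp hi j
    simpa using this
  have h1 := card_filter_split'' (univ : Finset (Fin m)) (fun j => α j ≠ 0) (Finset.mem_univ i)
  have h2 := card_filter_split'' (univ : Finset (Fin m)) (fun j => β j ≠ 0) (Finset.mem_univ i)
  have herase : (((univ : Finset (Fin m)).erase i).filter fun j => α j ≠ 0)
      = ((univ : Finset (Fin m)).erase i).filter fun j => β j ≠ 0 := by
    apply Finset.filter_congr
    intro j hj
    have hji : j ≠ i := (Finset.mem_erase.mp hj).1
    have : α j = β j := by
      by_contra hcc
      exact hji ((hmem j).mp hcc)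
    rw [this]
  rw [herase] at h1
  have hαβ : α i ≠ β i := (hmem i).mpr rfl
  have hwα : wt α = _ := h1
  have hwβ : wt β = _ := h2
  split_ifs at hwα hwβ <;> omega

end Aux2b

section Aux3
open Finset Pointwise

variable {m : ℕ}

lemma distC_def (γ : Fin m → Fin 2) (C : Set (Fin m → Fin 2)) :
    distC γ C = sInf {d | ∃ β ∈ C, hammingDist γ β = d} := rfl

lemma cell_one_eq {r : ℕ} (hm : m = 2*r+1) (hr : 1 ≤ r) :
    cell (wCode m) 1 = {γ : Fin m → Fin 2 | wt γ = r+2 ∨ wt γ = r-1} := by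
  have hC : ∀ β : Fin m → Fin 2, β ∈ wCode m ↔ (wt β = r+1 ∨ wt β = r) := by
    intro β
    rw [mem_wCode_iff]
    omega
  ext γ
  simp only [cell, Set.mem_setOf_eq]
  constructor
  · intro h
    rw [distC_def] at h
    have hne : {d | ∃ β ∈ wCode m, hammingDist γ β = d}.Nonempty := by
      by_contra hemp
      rw [Set.not_nonempty_iff_eq_empty] at hemp
      rw [hemp, Nat.sInf_empty] at h
      omega
    have h1 : 1 ∈ {d | ∃ β ∈ wCode m, hammingDist γ β = d} := by
      rw [← h]
      exact Nat.sInf_mem hne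
    obtain ⟨β, hβ, hdist⟩ := h1
    have hγ : ¬ (wt γ = r+1 ∨ wt γ = r) := by
      intro hcc
      have h0 : (0:ℕ) ∈ {d | ∃ β ∈ wCode m, hammingDist γ β = d} :=
        ⟨γ, (hC γ).mpr hcc, hammingDist_self γ⟩
      have := Nat.sInf_le h0
      omega
    have hw := hd_one_wt hdist
    have hβw := (hC β).mp hβ
    have hwle := wt_le γ
    omega
  · intro h
    have h0 : ¬ (wt γ = r+1 ∨ wt γ = r) := by omega
    have h1 : (1:ℕ) ∈ {d | ∃ β ∈ wCode m, hammingDist γ β = d} := by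
      rcases h with h | h
      · obtain ⟨β, hd1, hw⟩ := exists_flip_down (show 0 < wt γ by omega)
        exact ⟨β, (hC β).mpr (by omega), hd1⟩
      · obtain ⟨β, hd1, hw⟩ := exists_flip_up (show wt γ < m by omega)
        exact ⟨β, (hC β).mpr (by omega), hd1⟩
    rw [distC_def]
    have hle := Nat.sInf_le h1
    have hne0 : sInf {d | ∃ β ∈ wCode m, hammingDist γ β = d} ≠ 0 := by
      intro hcc
      have hmem := Nat.sInf_mem (⟨1, h1⟩ : Set.Nonempty {d | ∃ β ∈ wCode m, hammingDist γ β = d})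
      rw [hcc] at hmem
      obtain ⟨β, hβ, hd0⟩ := hmem
      have : γ = β := hammingDist_eq_zero.mp hd0
      subst this
      exact h0 ((hC γ).mp hβ)
    omega

lemma minDist_wCode {r : ℕ} (hm : m = 2*r+1) (hr : 1 ≤ r) : minDist (wCode m) = 1 := by
  obtain ⟨s, -, hs⟩ := Finset.exists_subset_card_eq (s := (univ : Finset (Fin m))) (n := r+1)
    (by simp only [Finset.card_univ, Fintype.card_fin]; omega)
  have hwβ : wt (fun i => if i ∈ s then (1:Fin 2) else 0) = r+1 := by
    rw [wt_indicator, hs]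
  set β : Fin m → Fin 2 := fun i => if i ∈ s then (1:Fin 2) else 0 with hβdef
  obtain ⟨γ, hd1, hw⟩ := exists_flip_down (show 0 < wt β by omega)
  have hβC : β ∈ wCode m := (mem_wCode_iff β).mpr (by omega)
  have hγC : γ ∈ wCode m := (mem_wCode_iff γ).mpr (by omega)
  have hbne : β ≠ γ := by
    intro hcc
    rw [hcc, hammingDist_self] at hd1
    omega
  have h1 : (1:ℕ) ∈ {d | ∃ b ∈ wCode m, ∃ c ∈ wCode m, b ≠ c ∧ hammingDist b c = d} :=
    ⟨β, hβC, γ, hγC, hbne, hd1⟩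
  show sInf {d | ∃ b ∈ wCode m, ∃ c ∈ wCode m, b ≠ c ∧ hammingDist b c = d} = 1
  have hle := Nat.sInf_le h1
  have hne0 : sInf {d | ∃ b ∈ wCode m, ∃ c ∈ wCode m, b ≠ c ∧ hammingDist b c = d} ≠ 0 := by
    intro hcc
    have hmem := Nat.sInf_mem (⟨1, h1⟩ :
      Set.Nonempty {d | ∃ b ∈ wCode m, ∃ c ∈ wCode m, b ≠ c ∧ hammingDist b c = d})
    rw [hcc] at hmem
    obtain ⟨b, -, c, -, hbc, hd0⟩ := hmem
    exact hbc (hammingDist_eq_zero.mp hd0)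
  omega

lemma autCode_wCode {r : ℕ} (hm : m = 2*r+1) (hr : 1 ≤ r) :
    autCode (wCode m) = diagL (Fin m) 2 := by
  apply le_antisymm
  · intro y hy
    obtain ⟨hy1, hy2⟩ := Subgroup.mem_inf.mp hy
    rw [MulAction.mem_stabilizer_iff] at hy2
    apply stab_to_diagL hm hr hy1
    intro α hα
    have : y • α ∈ y • wCode m := Set.smul_mem_smul_set hα
    rw [hy2, Equiv.Perm.smul_def] at this
    exact this
  · intro y hy
    exact Subgroup.mem_inf.mpr ⟨diagL_le_autH' hy,
      MulAction.mem_stabilizer_iff.mpr (diagL_smul_wCode hm hy)⟩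

end Aux3


/-- Theorem 3.3(iii): for odd `m ≥ 3`, the code `W([m/2],2)` of binary
`m`-tuples of weight `(m±1)/2` is neighbour transitive, `Aut(W([m/2],2)) = Diag_m(S_2) ⋊ L`,
and its minimum distance is `1`. -/
theorem wCode_neighbour_transitive (m : ℕ) (hm : 3 ≤ m) (hodd : Odd m) :
    (∃ X : Subgroup (Equiv.Perm (Fin m → Fin 2)), NbrTransitive X (wCode m)) ∧
    autCode (wCode m) = diagL (Fin m) 2 ∧
    minDist (wCode m) = 1 := by
  obtain ⟨r, hr⟩ := hodd
  have hm2 : m = 2*r+1 := by omega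
  have hr1 : 1 ≤ r := by omega
  refine ⟨⟨diagL (Fin m) 2, diagL_le_autH', ?_, ?_⟩, autCode_wCode hm2 hr1,
    minDist_wCode hm2 hr1⟩
  · have heq : wCode m = {α : Fin m → Fin 2 | wt α = (r+1) ∨ wt α = m - (r+1)} := by
      ext α
      rw [mem_wCode_iff]
      simp only [Set.mem_setOf_eq]
      omega
    rw [heq]
    exact orbit_weights (by omega)
  · rw [cell_one_eq hm2 hr1]
    have heq : {γ : Fin m → Fin 2 | wt γ = r+2 ∨ wt γ = r-1}
        = {α : Fin m → Fin 2 | wt α = (r+2) ∨ wt α = m - (r+2)} := by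
      ext α
      simp only [Set.mem_setOf_eq]
      omega
    rw [heq]
    exact orbit_weights (by omega)
end
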